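/- arXiv:1911.10116 — 5 statements merged into one kernel-verified Lean document; each statement's English description precedes it below -/
import Mathlib

section
/- For every network, the equilibrium weight recursion is well defined and every agent's behavior has a signal-counting interpretation: for every agent i ≥ 1, the equilibrium weight vector W_i satisfies Σ_j W_i(j) = Σ_j (W_i(j))², and the number r_i := Σ_j W_i(j) of signals aggregated by agent i satisfies 1 ≤ r_i ≤ i. (Equivalently, agent i's equilibrium log-action ℓ_i = Σ_j W_i(j)λ_j has conditional distribution N(r_i·2/σ², r_i·4/σ²) given ω = 1 and N(−r_i·2/σ², r_i·4/σ²) given ω = 0.) -/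
open Matrix Finset

/-- The equilibrium weight vectors of the sequential social-learning model:
`W_i = e_i` if `N(i) = ∅`, and otherwise `W_i = e_i + Σ_k β_{i,k} W_{j(k)}` where
`β_i = 𝟙ᵀ Ŵᵀ (ŴŴᵀ)⁻¹` and `Ŵ` is the matrix of neighbors' weight vectors restricted
to coordinates `1,…,i−1`. -/
noncomputable def eqW (Net : ℕ → Finset ℕ) (i : ℕ) : ℕ → ℝ :=
  Nat.strongRecOn i (fun n prev =>
    let nb := (Net n).filter (fun j => j < n)
    if nb.Nonempty then
      let What : Matrix {j // j ∈ nb} (Fin (n - 1)) ℝ :=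
        Matrix.of (fun j m => prev j.1 (Finset.mem_filter.mp j.2).2 (m.1 + 1))
      let beta : {j // j ∈ nb} → ℝ :=
        Matrix.vecMul (fun j => ∑ m, What j m) ((What * What.transpose)⁻¹)
      fun m => (if m = n then (1 : ℝ) else 0) +
        ∑ j : {j // j ∈ nb}, beta j * prev j.1 (Finset.mem_filter.mp j.2).2 m
    else fun m => if m = n then (1 : ℝ) else 0)

/-- The number of signals aggregated by agent `i`: `r_i = Σ_j W_i(j)`. -/
noncomputable def rcount (Net : ℕ → Finset ℕ) (i : ℕ) : ℝ :=
  ∑ j ∈ Finset.range (i + 1), eqW Net i j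

def nbhd (Net : ℕ → Finset ℕ) (n : ℕ) : Finset ℕ := (Net n).filter (fun j => j < n)

noncomputable def Wmat (Net : ℕ → Finset ℕ) (n : ℕ) :
    Matrix {j // j ∈ nbhd Net n} (Fin (n - 1)) ℝ :=
  Matrix.of fun j m => eqW Net j.1 (m.1 + 1)

noncomputable def betaVec (Net : ℕ → Finset ℕ) (n : ℕ) : {j // j ∈ nbhd Net n} → ℝ :=
  Matrix.vecMul (fun j => ∑ m, Wmat Net n j m) ((Wmat Net n * (Wmat Net n)ᵀ)⁻¹)

lemma eqW_eq (Net : ℕ → Finset ℕ) (n : ℕ) :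
    eqW Net n =
      if (nbhd Net n).Nonempty then
        (fun m => (if m = n then (1:ℝ) else 0) +
          ∑ j : {j // j ∈ nbhd Net n}, betaVec Net n j * eqW Net j.1 m)
      else fun m => if m = n then (1:ℝ) else 0 := by
  exact Nat.strongRecOn_eq _ _

lemma nbhd_mem (Net : ℕ → Finset ℕ) (hNet : ∀ i, ∀ j ∈ Net i, 1 ≤ j ∧ j < i) (n : ℕ)
    (j : {j // j ∈ nbhd Net n}) : 1 ≤ j.1 ∧ j.1 < n := by
  have := Finset.mem_filter.mp j.2
  exact ⟨(hNet n j.1 this.1).1, this.2⟩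

lemma eqW_diag_support (Net : ℕ → Finset ℕ) (hNet : ∀ i, ∀ j ∈ Net i, 1 ≤ j ∧ j < i) :
    ∀ n, eqW Net n n = 1 ∧ ∀ m, ((1 ≤ n ∧ m = 0) ∨ n < m) → eqW Net n m = 0 := by
  intro n
  induction n using Nat.strong_induction_on with
  | _ n ih =>
  rw [eqW_eq]
  by_cases h : (nbhd Net n).Nonempty
  · rw [if_pos h]
    constructor
    · have hz : ∀ j : {j // j ∈ nbhd Net n}, eqW Net j.1 n = 0 := fun j =>
        (ih j.1 (nbhd_mem Net hNet n j).2).2 n (Or.inr (nbhd_mem Net hNet n j).2)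
      simp [hz]
    · intro m hm
      have hmn : m ≠ n := by rcases hm with ⟨h1, rfl⟩ | h2 <;> omega
      have hz : ∀ j : {j // j ∈ nbhd Net n}, eqW Net j.1 m = 0 := by
        intro j
        refine (ih j.1 (nbhd_mem Net hNet n j).2).2 m ?_
        rcases hm with ⟨h1, rfl⟩ | h2
        · exact Or.inl ⟨(nbhd_mem Net hNet n j).1, rfl⟩
        · exact Or.inr (lt_trans (nbhd_mem Net hNet n j).2 h2)
      simp [hz, hmn]
  · rw [if_neg h]
    constructor
    · simp
    · intro m hm
      have hmn : m ≠ n := by rcases hm with ⟨h1, rfl⟩ | h2 <;> omega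
      simp [hmn]

lemma gram_isUnit (Net : ℕ → Finset ℕ) (hNet : ∀ i, ∀ j ∈ Net i, 1 ≤ j ∧ j < i) (n : ℕ) :
    IsUnit (Wmat Net n * (Wmat Net n)ᵀ).det := by
  set V := Wmat Net n with hV
  rw [isUnit_iff_ne_zero]
  intro hdet
  obtain ⟨v, hv0, hv⟩ := (Matrix.exists_mulVec_eq_zero_iff).mpr hdet
  have h1 : dotProduct v ((V * Vᵀ) *ᵥ v) = 0 := by rw [hv]; simp
  rw [← Matrix.mulVec_mulVec, Matrix.mulVec_transpose, Matrix.dotProduct_mulVec] at h1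
  have hw : ∀ m, (v ᵥ* V) m = 0 := by
    intro m
    have hnn : ∀ m ∈ (univ : Finset (Fin (n-1))), 0 ≤ (v ᵥ* V) m * (v ᵥ* V) m :=
      fun m _ => mul_self_nonneg _
    exact mul_self_eq_zero.mp ((Finset.sum_eq_zero_iff_of_nonneg hnn).mp h1 m (mem_univ m))
  set S := Finset.univ.filter (fun j => v j ≠ 0) with hSdef
  obtain ⟨j0, hj0⟩ := Function.ne_iff.mp hv0
  have hj0' : v j0 ≠ 0 := by simpa using hj0
  have hS : S.Nonempty := ⟨j0, by simp [hSdef, hj0']⟩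
  set jm := S.max' hS with hjm
  have hjmS : jm ∈ S := S.max'_mem hS
  have hjmne : v jm ≠ 0 := by
    have := Finset.mem_filter.mp hjmS
    simpa using this.2
  have hb := nbhd_mem Net hNet n jm
  have hfin : jm.1 - 1 < n - 1 := by omega
  have hkey := hw ⟨jm.1 - 1, hfin⟩
  have e1 : jm.1 - 1 + 1 = jm.1 := by omega
  have hsum : (v ᵥ* V) ⟨jm.1 - 1, hfin⟩ = v jm := by
    simp only [Matrix.vecMul, dotProduct, hV, Wmat, Matrix.of_apply]
    simp only [e1]
    rw [Finset.sum_eq_single jm]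
    · rw [(eqW_diag_support Net hNet jm.1).1, mul_one]
    · intro b _ hbne
      by_cases hvb : v b = 0
      · rw [hvb, zero_mul]
      · have hbS : b ∈ S := by simp [hSdef, hvb]
        have hble : b ≤ jm := S.le_max' b hbS
        have hblt : b.1 < jm.1 := Subtype.coe_lt_coe.mpr (lt_of_le_of_ne hble hbne)
        rw [(eqW_diag_support Net hNet b.1).2 jm.1 (Or.inr hblt), mul_zero]
    · intro hns; exact absurd (mem_univ jm) hns
  rw [hsum] at hkey
  exact hjmne hkey

lemma proj_key {ι : Type*} [Fintype ι] [DecidableEq ι] {N : ℕ} (V : Matrix ι (Fin N) ℝ)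
    (hdet : IsUnit (V * Vᵀ).det)
    (p : Fin N → ℝ)
    (hp : p = Matrix.vecMul (Matrix.vecMul (fun j => ∑ m', V j m') ((V * Vᵀ)⁻¹)) V) :
    (∑ m, p m) = ∑ m, (p m)^2 := by
  set u : ι → ℝ := fun j => ∑ m', V j m' with hu
  set β : ι → ℝ := Matrix.vecMul u ((V * Vᵀ)⁻¹) with hβ
  have hone : V *ᵥ (fun _ => (1:ℝ)) = u := by
    funext j; simp [Matrix.mulVec, dotProduct, hu]
  have hVp : V *ᵥ p = u := by
    rw [hp, ← Matrix.mulVec_transpose, Matrix.mulVec_mulVec]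
    have hβ' : Matrix.vecMul u ((V * Vᵀ)⁻¹) = (V * Vᵀ)⁻¹ *ᵥ u := by
      rw [← Matrix.mulVec_transpose, Matrix.transpose_nonsing_inv, Matrix.transpose_mul,
        Matrix.transpose_transpose]
    rw [hβ, hβ', Matrix.mulVec_mulVec, Matrix.mul_nonsing_inv _ hdet, Matrix.one_mulVec]
  have h1 : (∑ m, p m) = dotProduct β u := by
    have : (∑ m, p m) = dotProduct p (fun _ => 1) := by simp [dotProduct]
    rw [this, hp, ← Matrix.dotProduct_mulVec, hone]
  have h2 : (∑ m, (p m)^2) = dotProduct β u := by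
    have : (∑ m, (p m)^2) = dotProduct p p := by simp [dotProduct, sq]
    rw [this]
    nth_rewrite 1 [hp]
    rw [← Matrix.dotProduct_mulVec, hVp]
  rw [h1, h2]

/-- In any network, the equilibrium weight recursion is well
defined and every agent's behavior has a signal-counting interpretation: for
every agent `i ≥ 1`, `Σ_j W_i(j) = Σ_j W_i(j)²`, and `r_i := Σ_j W_i(j)`
satisfies `1 ≤ r_i ≤ i`. -/
theorem signal_counting_interpretation
    (Net : ℕ → Finset ℕ) (hNet : ∀ i, ∀ j ∈ Net i, 1 ≤ j ∧ j < i)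
    (i : ℕ) (hi : 1 ≤ i) :
    (∑ j ∈ Finset.range (i + 1), eqW Net i j)
        = (∑ j ∈ Finset.range (i + 1), (eqW Net i j) ^ 2) ∧
    1 ≤ rcount Net i ∧ rcount Net i ≤ (i : ℝ) := by
  obtain ⟨k, rfl⟩ : ∃ k, i = k + 1 := ⟨i - 1, by omega⟩
  by_cases h : (nbhd Net (k+1)).Nonempty
  · -- nonempty case
    set V := Wmat Net (k+1) with hV
    have hdet := gram_isUnit Net hNet (k+1)
    set p : Fin (k+1-1) → ℝ := Matrix.vecMul (betaVec Net (k+1)) V with hp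
    have hpdef : p = Matrix.vecMul (Matrix.vecMul (fun j => ∑ m', V j m') ((V * Vᵀ)⁻¹)) V := rfl
    have key : (∑ m, p m) = ∑ m, (p m)^2 := proj_key V hdet p hpdef
    have hfun := eqW_eq Net (k+1)
    rw [if_pos h] at hfun
    have hsupp := eqW_diag_support Net hNet
    have hdiag : eqW Net (k+1) (k+1) = 1 := (hsupp (k+1)).1
    have h0 : eqW Net (k+1) 0 = 0 := (hsupp (k+1)).2 0 (Or.inl ⟨by omega, rfl⟩)
    have hpm : ∀ m : Fin (k+1-1), eqW Net (k+1) (m.1+1) = p m := by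
      intro m
      have hmlt : m.1 < k := by have := m.2; omega
      rw [hfun]
      have hne : m.1 + 1 ≠ k+1 := by omega
      simp only [hne, if_false, zero_add]
      rw [hp]
      simp [Matrix.vecMul, dotProduct, hV, Wmat]
    have hdec : ∀ f : ℕ → ℝ, (∑ j ∈ Finset.range (k+1+1), f j)
        = f 0 + (∑ j ∈ Finset.range k, f (j+1)) + f (k+1) := by
      intro f
      rw [Finset.sum_range_succ, Finset.sum_range_succ']
      ring
    have hconv : ∀ g : ℕ → ℝ, (∑ j ∈ Finset.range k, g (j+1)) = ∑ m : Fin (k+1-1), g (m.1+1) := by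
      intro g
      have := Fin.sum_univ_eq_sum_range (fun j => g (j+1)) (k+1-1)
      rw [Nat.add_sub_cancel] at this
      exact this.symm
    have hS1 : (∑ j ∈ Finset.range (k+1+1), eqW Net (k+1) j) = 1 + ∑ m, p m := by
      rw [hdec, h0, hdiag, hconv]
      rw [Finset.sum_congr rfl (fun m _ => hpm m)]
      ring
    have hS2 : (∑ j ∈ Finset.range (k+1+1), (eqW Net (k+1) j)^2) = 1 + ∑ m, (p m)^2 := by
      rw [hdec, h0, hdiag, hconv (fun j => (eqW Net (k+1) j)^2)]
      rw [Finset.sum_congr rfl (fun m (_ : m ∈ univ) => by rw [hpm m])]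
      ring
    have hps : (0:ℝ) ≤ ∑ m, p m := by
      rw [key]; exact Finset.sum_nonneg fun m _ => sq_nonneg _
    have hcard : (∑ m : Fin (k+1-1), ((1:ℝ))^2) = (k : ℝ) := by
      simp
    have cauchy := Finset.sum_mul_sq_le_sq_mul_sq Finset.univ p (fun _ => (1:ℝ))
    rw [hcard] at cauchy
    simp only [mul_one] at cauchy
    have hle : (∑ m, p m) ≤ (k : ℝ) := by
      have hk : (0:ℝ) ≤ (k:ℝ) := by positivity
      nlinarith [cauchy, key, hps]
    refine ⟨by rw [hS1, hS2, key], ?_, ?_⟩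
    · rw [rcount, hS1]; linarith
    · rw [rcount, hS1]; push_cast; linarith
  · -- empty case
    have hfun := eqW_eq Net (k+1)
    rw [if_neg h] at hfun
    have hsum1 : (∑ j ∈ Finset.range (k+1+1), eqW Net (k+1) j) = 1 := by
      rw [hfun]
      simp [Finset.sum_ite_eq']
    have hsum2 : (∑ j ∈ Finset.range (k+1+1), (eqW Net (k+1) j)^2) = 1 := by
      rw [hfun]
      simp [apply_ite (fun x : ℝ => x^2), Finset.sum_ite_eq']
    refine ⟨by rw [hsum1, hsum2], ?_, ?_⟩
    · rw [rcount, hsum1]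
    · rw [rcount, hsum1]; push_cast; linarith
end

section
/- Let d, m ≥ 1 and let Ŵ be a d×m real matrix with linearly independent rows (so ŴŴᵀ is invertible). Let 𝟙 ∈ ℝ^m be the all-ones vector, β := 𝟙ᵀ Ŵᵀ (ŴŴᵀ)⁻¹ ∈ ℝ^d, and w := βŴ ∈ ℝ^m. Then Σ_{k=1}^m w_k = Σ_{k=1}^m w_k². Consequently, a rational agent who best responds to predecessors using arbitrary log-linear strategies (so that the predecessors' log-actions are ℓ = Ŵλ for an arbitrary weight matrix Ŵ applied to the i.i.d. conditionally Gaussian log-signals λ) has a log-action λ_I + Σ_k β_k ℓ_k whose total weight vector (w, 1) satisfies sum-of-weights = sum-of-squared-weights, i.e. her behavior has a signal-counting interpretation. -/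
open Matrix Finset

/-- Let `Ŵ` be a `d×m` real matrix with linearly independent rows,
`β := 𝟙ᵀ Ŵᵀ (ŴŴᵀ)⁻¹` and `w := βŴ`. Then `Σ w_k = Σ w_k²`; consequently the total
weight vector `(w, 1)` of a rational agent best responding to arbitrary log-linear
predecessors also satisfies sum-of-weights = sum-of-squared-weights, i.e. her
behavior has a signal-counting interpretation. -/
theorem best_response_signal_counting (d m : ℕ) (hd : 1 ≤ d) (hm : 1 ≤ m)
    (What : Matrix (Fin d) (Fin m) ℝ)
    (hrows : LinearIndependent ℝ (fun i : Fin d => What i)) :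
    ∀ β w : _, β = Matrix.vecMul (Matrix.vecMul (fun _ : Fin m => (1 : ℝ)) What.transpose)
        ((What * What.transpose)⁻¹) →
      w = Matrix.vecMul β What →
      ((∑ k, w k) = ∑ k, (w k) ^ 2) ∧
      ((∑ k, w k) + 1 = (∑ k, (w k) ^ 2) + 1 ^ 2) := by
  intro β w hβ hw
  set u : Fin m → ℝ := fun _ => 1 with hu
  set G : Matrix (Fin d) (Fin d) ℝ := What * What.transpose with hG
  set c : Fin d → ℝ := Matrix.vecMul u What.transpose with hc
  -- G is invertible
  have hGunit : IsUnit G := by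
    rw [← Matrix.mulVec_injective_iff_isUnit]
    have hker : ∀ x : Fin d → ℝ, G *ᵥ x = 0 → x = 0 := by
      intro x hx
      have h1 : Matrix.vecMul x What = 0 := by
        have h0 : x ⬝ᵥ (G *ᵥ x) = 0 := by rw [hx]; simp
        rw [hG, ← Matrix.mulVec_mulVec, Matrix.dotProduct_mulVec,
          Matrix.mulVec_transpose] at h0
        exact dotProduct_self_eq_zero.mp h0
      have := (Fintype.linearIndependent_iff.mp hrows) x ?_
      · funext i; exact this i
      · funext j
        have := congrFun h1 j
        simpa [Matrix.vecMul, dotProduct] using this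
    intro x y hxy
    have : G *ᵥ (x - y) = 0 := by
      rw [Matrix.mulVec_sub, hxy, sub_self]
    have := hker _ this
    exact sub_eq_zero.mp this
  have hinv : G⁻¹ * G = 1 :=
    Matrix.nonsing_inv_mul G (Matrix.isUnit_iff_isUnit_det G |>.mp hGunit)
  have hβc : β = Matrix.vecMul c G⁻¹ := hβ
  -- sum of weights = β ⬝ᵥ c
  have hsum : (∑ k, w k) = β ⬝ᵥ c := by
    have : (∑ k, w k) = w ⬝ᵥ u := by simp [dotProduct, hu]
    rw [this, hw, hc, Matrix.vecMul_transpose, Matrix.dotProduct_mulVec]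
  -- sum of squares = c ⬝ᵥ β
  have hsumsq : (∑ k, (w k) ^ 2) = c ⬝ᵥ β := by
    have h1 : (∑ k, (w k) ^ 2) = w ⬝ᵥ w := by
      simp [dotProduct, sq]
    have h2 : w ⬝ᵥ w = Matrix.vecMul β G ⬝ᵥ β := by
      rw [hw]
      nth_rewrite 2 [(Matrix.mulVec_transpose What β).symm]
      rw [Matrix.dotProduct_mulVec, Matrix.vecMul_vecMul, ← hG]
    have h3 : Matrix.vecMul β G = c := by
      rw [hβc, Matrix.vecMul_vecMul, hinv, Matrix.vecMul_one]
    rw [h1, h2, h3]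
  have key : (∑ k, w k) = ∑ k, (w k) ^ 2 := by
    rw [hsum, hsumsq, dotProduct_comm]
  exact ⟨key, by rw [key]; norm_num⟩
end

section
/- In any generations network with generation size K associated to symmetric observation sets with parameters (d, c) satisfying d ≥ 2 and c < d, the aggregative efficiency exists and equals lim_{i→∞} r_i/i = (2 − 1/K) · (1/K). In particular, it depends only on the generation size K and coincides with the aggregative efficiency of the maximal generations network with the same K. -/
open Matrix Finset Filter

/-- The generations network with generation size `K` and observation sets `Ψ`:
`N(i) = ∅` for `1 ≤ i ≤ K`, and `N((t−1)K+k) = {(t−2)K+ψ : ψ ∈ Ψ_k}` for `t ≥ 2`,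
`1 ≤ k ≤ K`. -/
def genNet (K : ℕ) (Ψ : ℕ → Finset ℕ) : ℕ → Finset ℕ := fun i =>
  if i ≤ K then ∅
  else (Ψ ((i - 1) % K + 1)).image (fun ψ => ((i - 1) / K - 1) * K + ψ)


theorem Nat.strongRecOn_beta' {motive : ℕ → Sort*} (n : ℕ) (ind : ∀ n, (∀ m, m < n → motive m) → motive n) :
    Nat.strongRecOn n ind = ind n (fun m _ => Nat.strongRecOn m ind) := by
  unfold Nat.strongRecOn; rw [WellFounded.fix_eq]; rfl

theorem eqW_eq_s7 (Net : ℕ → Finset ℕ) (n : ℕ) :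
    eqW Net n =
      (let nb := (Net n).filter (fun j => j < n)
       if nb.Nonempty then
         let What : Matrix {j // j ∈ nb} (Fin (n - 1)) ℝ :=
           Matrix.of (fun j m => eqW Net j.1 (m.1 + 1))
         let beta : {j // j ∈ nb} → ℝ :=
           Matrix.vecMul (fun j => ∑ m, What j m) ((What * What.transpose)⁻¹)
         fun m => (if m = n then (1 : ℝ) else 0) +
           ∑ j : {j // j ∈ nb}, beta j * eqW Net j.1 m
       else fun m => if m = n then (1 : ℝ) else 0) := by
  rw [eqW, Nat.strongRecOn_beta']
  rfl

def nbh (Net : ℕ → Finset ℕ) (n : ℕ) : Finset ℕ := (Net n).filter (fun j => j < n)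

noncomputable def WhatM (Net : ℕ → Finset ℕ) (n : ℕ) :
    Matrix {j // j ∈ nbh Net n} (Fin (n - 1)) ℝ :=
  Matrix.of (fun j m => eqW Net j.1 (m.1 + 1))

noncomputable def betaV (Net : ℕ → Finset ℕ) (n : ℕ) : {j // j ∈ nbh Net n} → ℝ :=
  Matrix.vecMul (fun j => ∑ m, WhatM Net n j m) ((WhatM Net n * (WhatM Net n).transpose)⁻¹)

theorem eqW_of_empty {Net : ℕ → Finset ℕ} {n : ℕ} (h : ¬ (nbh Net n).Nonempty) :
    eqW Net n = fun m => if m = n then (1:ℝ) else 0 := by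
  rw [eqW_eq_s7]
  exact if_neg h

theorem eqW_of_nonempty {Net : ℕ → Finset ℕ} {n : ℕ} (h : (nbh Net n).Nonempty) :
    eqW Net n = fun m => (if m = n then (1:ℝ) else 0) +
      ∑ j : {j // j ∈ nbh Net n}, betaV Net n j * eqW Net j.1 m := by
  rw [eqW_eq_s7]
  exact if_pos h


lemma sym_mul_apply {ι : Type*} [Fintype ι] [DecidableEq ι] (a b p q : ℝ) (i j : ι) :
    ((Matrix.of fun i j : ι => if i = j then a else b) *
      (Matrix.of fun i j : ι => if i = j then p else q)) i j
    = (Fintype.card ι : ℝ) * (b * q) + (a - b) * q + b * (p - q) +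
      (if i = j then (a - b) * (p - q) else 0) := by
  rw [Matrix.mul_apply]
  have expand : ∀ k : ι, (Matrix.of fun i j : ι => if i = j then a else b) i k *
      (Matrix.of fun i j : ι => if i = j then p else q) k j
      = b * q + (if k = i then (a-b) * q else 0) + (if k = j then b * (p-q) else 0)
        + (if k = i then (if k = j then (a-b)*(p-q) else 0) else 0) := by
    intro k
    simp only [Matrix.of_apply]
    by_cases h : k = i
    · subst h
      by_cases h' : k = j
      · subst h'; simp; ring
      · simp [h', Ne.symm h']; ring
    · by_cases h' : k = j
      · subst h'; simp [h, Ne.symm h]; ring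
      · simp [h, h', Ne.symm h, Ne.symm h']
  simp only [expand]
  rw [Finset.sum_add_distrib, Finset.sum_add_distrib, Finset.sum_add_distrib]
  rw [Finset.sum_const, Finset.sum_ite_eq', Finset.sum_ite_eq', Finset.sum_ite_eq']
  simp only [Finset.mem_univ, if_true, Finset.card_univ, nsmul_eq_mul]

lemma sum_ite_subtype {ι : Type*} [Fintype ι] [DecidableEq ι] (p q : ℝ) (j : ι) :
    ∑ j' : ι, (if j' = j then p else q) = (Fintype.card ι : ℝ) * q + (p - q) := by
  have : ∀ j' : ι, (if j' = j then p else q) = q + (if j' = j then p - q else 0) := by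
    intro j'; rcases eq_or_ne j' j with h|h <;> simp [h]
  simp only [this]
  rw [Finset.sum_add_distrib, Finset.sum_const, Finset.sum_ite_eq']
  simp only [Finset.mem_univ, if_true, Finset.card_univ, nsmul_eq_mul]

lemma sum_range_cut {f : ℕ → ℝ} {N M : ℕ} (h : ∀ m, N < m → f m = 0) (hNM : N ≤ M) :
    ∑ m ∈ Finset.range (M+1), f m = ∑ m ∈ Finset.range (N+1), f m := by
  symm
  apply Finset.sum_subset
  · exact Finset.range_subset_range.mpr (by omega)
  · intro x hx hx'
    exact h x (by simp at hx hx'; omega)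

lemma sum_range_shift {f : ℕ → ℝ} (h0 : f 0 = 0) (n : ℕ) :
    ∑ m ∈ Finset.range n, f (m+1) = ∑ m ∈ Finset.range (n+1), f m := by
  rw [Finset.sum_range_succ' (f := f)]
  simp [h0]


noncomputable def rbAux (d c : ℕ) : ℕ → ℝ × ℝ
  | 0 => (1, 0)
  | t+1 =>
    let r := (rbAux d c t).1
    let b := (rbAux d c t).2
    let s := r + ((d : ℝ) - 1) * b
    (1 + d * r ^ 2 / s, (r / s) ^ 2 * (c * r + ((d : ℝ) ^ 2 - c) * b))

noncomputable def rr (d c : ℕ) (t : ℕ) : ℝ := (rbAux d c t).1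
noncomputable def bb (d c : ℕ) (t : ℕ) : ℝ := (rbAux d c t).2
noncomputable def ss (d c : ℕ) (t : ℕ) : ℝ := rr d c t + ((d : ℝ) - 1) * bb d c t

lemma rr_zero (d c : ℕ) : rr d c 0 = 1 := rfl
lemma bb_zero (d c : ℕ) : bb d c 0 = 0 := rfl
lemma rr_succ (d c t : ℕ) : rr d c (t+1) = 1 + d * rr d c t ^ 2 / ss d c t := rfl
lemma bb_succ (d c t : ℕ) :
    bb d c (t+1) = (rr d c t / ss d c t) ^ 2 * (c * rr d c t + ((d:ℝ)^2 - c) * bb d c t) := rfl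

section pos
variable {d c : ℕ} (hd : 1 ≤ d) (hcd : c < d)
include hd hcd

lemma rb_pos : ∀ t : ℕ, ((t : ℝ) + 1) ≤ rr d c t ∧ 0 ≤ bb d c t ∧ 1 ≤ rr d c t - bb d c t := by
  have hd1 : (1:ℝ) ≤ (d:ℝ) := by exact_mod_cast hd
  have hcd' : (c:ℝ) + 1 ≤ (d:ℝ) := by exact_mod_cast hcd
  intro t
  induction t with
  | zero => simp [rr_zero, bb_zero]
  | succ t ih =>
    obtain ⟨hr, hb, hu⟩ := ih
    have hr1 : (1:ℝ) ≤ rr d c t := le_trans (by push_cast; linarith) hr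
    have hbr : bb d c t ≤ rr d c t := by linarith
    have hs1 : (1:ℝ) ≤ ss d c t := by
      have : 0 ≤ ((d:ℝ) - 1) * bb d c t := mul_nonneg (by linarith) hb
      unfold ss; linarith
    have hs0 : (0:ℝ) < ss d c t := by linarith
    have hsd : ss d c t ≤ d * rr d c t := by
      unfold ss; nlinarith
    refine ⟨?_, ?_, ?_⟩
    · rw [rr_succ]
      have h1 : rr d c t ≤ d * rr d c t ^ 2 / ss d c t := by
        rw [le_div_iff₀ hs0]; nlinarith
      push_cast; linarith
    · rw [bb_succ]
      have hc0 : (0:ℝ) ≤ (c:ℝ) := Nat.cast_nonneg c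
      have hdc : (c:ℝ) ≤ (d:ℝ)^2 := by nlinarith
      have h2 : (0:ℝ) ≤ (rr d c t / ss d c t)^2 := sq_nonneg _
      have h3 : (0:ℝ) ≤ (c:ℝ) * rr d c t + ((d:ℝ)^2 - c) * bb d c t := by
        have := mul_nonneg (by linarith : (0:ℝ) ≤ (d:ℝ)^2 - c) hb
        nlinarith
      positivity
    · rw [rr_succ, bb_succ]
      have hu' : rr d c (t+1) - bb d c (t+1)
          = 1 + ((d:ℝ) - c) * (rr d c t / ss d c t)^2 * (rr d c t - bb d c t) := by
        rw [rr_succ, bb_succ]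
        have hss : ss d c t ≠ 0 := ne_of_gt hs0
        field_simp
        unfold ss
        ring
      rw [rr_succ, bb_succ] at hu'
      rw [hu']
      have : 0 ≤ ((d:ℝ) - c) * (rr d c t / ss d c t)^2 * (rr d c t - bb d c t) :=
        mul_nonneg (mul_nonneg (by linarith) (sq_nonneg _)) (by linarith)
      linarith
end pos


/-- contraction lemma -/
lemma tendsto_zero_of_contract (y ε : ℕ → ℝ) (q : ℝ) (hq0 : 0 ≤ q) (hq1 : q < 1)
    (hy : ∀ t, 0 ≤ y t) (hε : Tendsto ε atTop (nhds 0))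
    (hrec : ∀ᶠ t in atTop, y (t+1) ≤ q * y t + ε t) :
    Tendsto y atTop (nhds 0) := by
  rw [tendsto_order]
  constructor
  · intro a ha
    exact Eventually.of_forall fun t => lt_of_lt_of_le ha (hy t)
  · intro a ha
    obtain ⟨T₁, hT₁⟩ := (eventually_atTop).mp hrec
    have hε' : ∀ᶠ t in atTop, ε t ≤ a * (1 - q) / 2 := by
      exact hε.eventually (eventually_le_nhds (div_pos (mul_pos ha (by linarith)) two_pos))
    obtain ⟨T₂, hT₂⟩ := (eventually_atTop).mp hε'
    set T := max T₁ T₂ with hT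
    have key : ∀ n : ℕ, y (T + n) ≤ q ^ n * y T + a / 2 := by
      intro n
      induction n with
      | zero => simp; nlinarith [hy T]
      | succ n ih =>
        have h1 : y (T + n + 1) ≤ q * y (T + n) + ε (T + n) :=
          hT₁ (T + n) (le_trans (le_max_left _ _) (Nat.le_add_right _ _))
        have h2 : ε (T + n) ≤ a * (1 - q) / 2 :=
          hT₂ (T + n) (le_trans (le_max_right _ _) (Nat.le_add_right _ _))
        have h3 : q * y (T + n) ≤ q * (q ^ n * y T + a / 2) :=
          mul_le_mul_of_nonneg_left ih hq0
        have : y (T + (n+1)) = y (T + n + 1) := by ring_nf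
        rw [this]
        calc y (T+n+1) ≤ q * (q ^ n * y T + a/2) + a * (1-q)/2 := by linarith
          _ = q ^ (n+1) * y T + (q * a/2 + a*(1-q)/2) := by ring
          _ ≤ q ^ (n+1) * y T + a/2 := by nlinarith
    have hpow : Tendsto (fun n : ℕ => q ^ n * y T) atTop (nhds 0) := by
      have := tendsto_pow_atTop_nhds_zero_of_lt_one hq0 hq1
      simpa using this.mul_const (y T)
    have : ∀ᶠ n in atTop, q ^ n * y T < a / 2 :=
      hpow.eventually (eventually_lt_nhds (by linarith))
    obtain ⟨N, hN⟩ := (eventually_atTop).mp this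
    rw [eventually_atTop]
    refine ⟨T + N, fun t ht => ?_⟩
    obtain ⟨n, rfl⟩ := Nat.exists_eq_add_of_le ht
    have h4 : y (T + (N + n)) ≤ q ^ (N+n) * y T + a/2 := key (N+n)
    have h5 : q ^ (N+n) * y T ≤ q ^ N * y T := by
      apply mul_le_mul_of_nonneg_right _ (hy T)
      exact pow_le_pow_of_le_one hq0 hq1.le (Nat.le_add_right _ _)
    have := hN N le_rfl
    calc y (T + N + n) = y (T + (N+n)) := by ring_nf
      _ ≤ q ^ (N+n) * y T + a/2 := h4
      _ < a := by linarith


section B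
variable {K d c : ℕ} {Ψ : ℕ → Finset ℕ}

lemma indicator_sum (hK : 1 ≤ K) (S : Finset ℕ) (hS : S ⊆ Finset.Icc 1 K) :
    ∑ ψ : Fin K, (if (ψ:ℕ)+1 ∈ S then (1:ℝ) else 0) = S.card := by
  rw [Fin.sum_univ_eq_sum_range (fun m => if m+1 ∈ S then (1:ℝ) else 0)]
  have h1 : ∑ m ∈ Finset.range K, (if m+1 ∈ S then (1:ℝ) else 0)
      = ∑ m ∈ Finset.Icc 1 K, (if m ∈ S then (1:ℝ) else 0) := by
    refine Finset.sum_nbij' (fun m => m + 1) (fun m => m - 1) ?_ ?_ ?_ ?_ ?_ <;>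
      intro a ha <;>
      first
        | rfl
        | (simp only [Finset.mem_range, Finset.mem_Icc] at ha ⊢; omega)
  rw [h1, Finset.sum_ite_mem]
  rw [Finset.inter_eq_right.mpr hS]
  simp

lemma design_identity (hK : 1 ≤ K) (hd : 2 ≤ d) (hcd : c < d)
    (hsub : ∀ k ∈ Finset.Icc 1 K, Ψ k ⊆ Finset.Icc 1 K)
    (hcard : ∀ k ∈ Finset.Icc 1 K, (Ψ k).card = d)
    (hinter : ∀ k₁ ∈ Finset.Icc 1 K, ∀ k₂ ∈ Finset.Icc 1 K, k₁ ≠ k₂ →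
      ((Ψ k₁) ∩ (Ψ k₂)).card = c) :
    (c:ℝ) * ((K:ℝ) - 1) = (d:ℝ) * ((d:ℝ) - 1) := by
  set N : Matrix (Fin K) (Fin K) ℝ :=
    Matrix.of (fun k ψ => if (ψ:ℕ)+1 ∈ Ψ ((k:ℕ)+1) then (1:ℝ) else 0) with hN
  have hmem : ∀ k : Fin K, (k:ℕ)+1 ∈ Finset.Icc 1 K := by
    intro k; have hk := k.2; simp only [Finset.mem_Icc]; omega
  -- row sums
  have hrow : ∀ k : Fin K, ∑ ψ, N k ψ = (d:ℝ) := by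
    intro k
    rw [hN]
    simp only [Matrix.of_apply]
    rw [indicator_sum hK _ (hsub _ (hmem k)), hcard _ (hmem k)]
  -- Gram entries
  have hMent : ∀ k k' : Fin K, ∑ ψ, N k ψ * N k' ψ = if k = k' then (d:ℝ) else (c:ℝ) := by
    intro k k'
    have hprod : ∀ ψ : Fin K, N k ψ * N k' ψ
        = if (ψ:ℕ)+1 ∈ (Ψ ((k:ℕ)+1) ∩ Ψ ((k':ℕ)+1)) then (1:ℝ) else 0 := by
      intro ψ
      rw [hN]; simp only [Matrix.of_apply, Finset.mem_inter]
      by_cases h1 : (ψ:ℕ)+1 ∈ Ψ ((k:ℕ)+1) <;> by_cases h2 : (ψ:ℕ)+1 ∈ Ψ ((k':ℕ)+1) <;>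
        simp [h1, h2]
    simp only [hprod]
    rw [indicator_sum hK _ (Finset.Subset.trans Finset.inter_subset_left (hsub _ (hmem k)))]
    rcases eq_or_ne k k' with h | h
    · subst h; rw [Finset.inter_self, hcard _ (hmem k)]; simp
    · rw [hinter _ (hmem k) _ (hmem k') (by simpa using Fin.val_ne_of_ne h)]; simp [h]
  have hM : N * N.transpose = Matrix.of (fun k k' : Fin K => if k = k' then (d:ℝ) else c) := by
    ext k k'
    rw [Matrix.mul_apply]
    simp only [Matrix.transpose_apply, Matrix.of_apply]
    exact hMent k k'
  -- invert M
  have hd1 : (1:ℝ) ≤ (d:ℝ) := by exact_mod_cast le_trans one_le_two hd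
  have hK1 : (1:ℝ) ≤ (K:ℝ) := by exact_mod_cast hK
  have hc0 : (0:ℝ) ≤ (c:ℝ) := Nat.cast_nonneg c
  have hu0 : (0:ℝ) < (d:ℝ) - c := by
    have : (c:ℝ) + 1 ≤ (d:ℝ) := by exact_mod_cast hcd
    linarith
  have hS0 : (0:ℝ) < (d:ℝ) - c + K * c := by nlinarith
  set q : ℝ := -(c:ℝ) / (((d:ℝ) - c) * ((d:ℝ) - c + K * c)) with hq
  set p : ℝ := q + 1/((d:ℝ) - c) with hp
  have hMH : (Matrix.of (fun k k' : Fin K => if k = k' then (d:ℝ) else c)) *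
      (Matrix.of (fun k k' : Fin K => if k = k' then p else q)) = 1 := by
    ext i j
    rw [sym_mul_apply]
    have hcard' : (Fintype.card (Fin K) : ℝ) = K := by simp
    rw [hcard', Matrix.one_apply]
    have hpq : p - q = 1/((d:ℝ)-c) := by rw [hp]; ring
    rcases eq_or_ne i j with h | h
    · simp only [h, if_true]
      rw [hpq, hq]; field_simp; ring
    · simp only [h, if_false, if_neg h]
      rw [hpq, hq]; field_simp; ring
  have hdetM : IsUnit (N * N.transpose).det := by
    rw [hM]
    exact Matrix.isUnit_det_of_right_inverse hMH
  have hdetN : IsUnit N.det := by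
    rw [Matrix.det_mul, Matrix.det_transpose] at hdetM
    rcases isUnit_iff_ne_zero.mp hdetM with h
    exact isUnit_iff_ne_zero.mpr (fun h0 => h (by rw [h0]; ring))
  -- the degree vector argument
  set degv : Fin K → ℝ := fun ψ => ∑ k', N k' ψ with hdegv
  set x : Fin K → ℝ := fun ψ => (d:ℝ) * degv ψ - ((d:ℝ) + ((K:ℝ)-1)*c) with hx
  have hNx : N.mulVec x = 0 := by
    ext k
    rw [Matrix.mulVec]
    simp only [dotProduct, hx]
    have expand : ∀ ψ, N k ψ * ((d:ℝ) * degv ψ - ((d:ℝ) + ((K:ℝ)-1)*c))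
        = (d:ℝ) * (N k ψ * degv ψ) - ((d:ℝ) + ((K:ℝ)-1)*c) * N k ψ := by intro ψ; ring
    simp only [expand]
    rw [Finset.sum_sub_distrib, ← Finset.mul_sum, ← Finset.mul_sum]
    have h1 : ∑ ψ, N k ψ * degv ψ = (d:ℝ) + ((K:ℝ)-1)*c := by
      simp only [hdegv, Finset.mul_sum]
      rw [Finset.sum_comm]
      have : ∀ k' : Fin K, ∑ ψ, N k ψ * N k' ψ = if k = k' then (d:ℝ) else c :=
        fun k' => hMent k k'
      rw [Finset.sum_congr rfl (fun k' _ => this k')]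
      have flip : ∀ k' : Fin K, (if k = k' then (d:ℝ) else c) = if k' = k then (d:ℝ) else c :=
        fun k' => if_congr eq_comm rfl rfl
      rw [Finset.sum_congr rfl (fun k' _ => flip k'), sum_ite_subtype]
      simp only [Fintype.card_fin]
      ring
    rw [h1, hrow]
    simp [Pi.zero_apply]; ring
  have hxz : x = 0 := by
    have h2 : N.mulVec x = N.mulVec 0 := by rw [hNx]; simp
    have hinv := Matrix.nonsing_inv_mul N hdetN
    have := congrArg (fun v => (N⁻¹).mulVec v) h2
    simpa [Matrix.mulVec_mulVec, hinv] using this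
  -- sum coordinates
  have hsum : ∑ ψ : Fin K, x ψ = 0 := by rw [hxz]; simp
  have hdegsum : ∑ ψ : Fin K, degv ψ = (K:ℝ) * d := by
    simp only [hdegv]
    rw [Finset.sum_comm]
    rw [Finset.sum_congr rfl (fun k' _ => hrow k')]
    simp [mul_comm]
  simp only [hx] at hsum
  rw [Finset.sum_sub_distrib, ← Finset.mul_sum, hdegsum, Finset.sum_const] at hsum
  simp only [Finset.card_univ, Fintype.card_fin, nsmul_eq_mul] at hsum
  have hKne : (K:ℝ) ≠ 0 := by linarith
  have : (d:ℝ) * ((K:ℝ)*d) = (K:ℝ) * ((d:ℝ) + ((K:ℝ)-1)*c) := by linarith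
  field_simp at this
  nlinarith [this]
end B


section D
variable {K d c : ℕ} {Ψ : ℕ → Finset ℕ}

def GenFacts (K d c : ℕ) (Ψ : ℕ → Finset ℕ) (t : ℕ) : Prop :=
  ∀ k, 1 ≤ k → k ≤ K →
    eqW (genNet K Ψ) (t*K+k) 0 = 0 ∧
    (∀ m, t*K+k < m → eqW (genNet K Ψ) (t*K+k) m = 0) ∧
    (∑ m ∈ Finset.range (t*K+k+1), eqW (genNet K Ψ) (t*K+k) m = rr d c t) ∧
    (∀ k', 1 ≤ k' → k' ≤ K →
      ∑ m ∈ Finset.range (t*K+K+1),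
        eqW (genNet K Ψ) (t*K+k) m * eqW (genNet K Ψ) (t*K+k') m
        = if k = k' then rr d c t else bb d c t)

lemma nbh_first {k : ℕ} (hkK : k ≤ K) : nbh (genNet K Ψ) k = ∅ := by
  unfold nbh genNet
  rw [if_pos hkK, Finset.filter_empty]

lemma nbh_gen (hK : 1 ≤ K)
    (hsub : ∀ k ∈ Finset.Icc 1 K, Ψ k ⊆ Finset.Icc 1 K)
    {t k : ℕ} (hk1 : 1 ≤ k) (hkK : k ≤ K) :
    nbh (genNet K Ψ) ((t+1)*K + k) = (Ψ k).image (fun ψ => t*K + ψ) := by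
  have hmul : (t+1)*K = t*K + K := by ring
  have hiK : ¬ ((t+1)*K + k ≤ K) := by omega
  unfold nbh genNet
  rw [if_neg hiK]
  have hn : (t+1)*K + k - 1 = (k-1) + (t+1)*K := by omega
  have h1 : ((t+1)*K + k - 1) % K + 1 = k := by
    rw [hn, Nat.add_mul_mod_self_right, Nat.mod_eq_of_lt (by omega)]
    omega
  have h2 : ((t+1)*K + k - 1) / K - 1 = t := by
    rw [hn, Nat.add_mul_div_right _ _ (by omega : 0 < K), Nat.div_eq_of_lt (by omega)]
    omega
  rw [h1, h2]
  apply Finset.filter_true_of_mem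
  intro j hj
  simp only [Finset.mem_image] at hj
  obtain ⟨ψ, hψ, rfl⟩ := hj
  have hψK := (Finset.mem_Icc.mp (hsub k (Finset.mem_Icc.mpr ⟨hk1, hkK⟩) hψ)).2
  omega

lemma mem_E (hsub : ∀ k ∈ Finset.Icc 1 K, Ψ k ⊆ Finset.Icc 1 K)
    {t k j : ℕ} (hk1 : 1 ≤ k) (hkK : k ≤ K)
    (hj : j ∈ (Ψ k).image (fun ψ => t*K + ψ)) :
    ∃ ψ, ψ ∈ Ψ k ∧ 1 ≤ ψ ∧ ψ ≤ K ∧ j = t*K + ψ := by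
  simp only [Finset.mem_image] at hj
  obtain ⟨ψ, hψ, rfl⟩ := hj
  have := Finset.mem_Icc.mp (hsub k (Finset.mem_Icc.mpr ⟨hk1, hkK⟩) hψ)
  exact ⟨ψ, hψ, this.1, this.2, rfl⟩

lemma card_E (hcard : ∀ k ∈ Finset.Icc 1 K, (Ψ k).card = d)
    {t k : ℕ} (hk1 : 1 ≤ k) (hkK : k ≤ K) :
    ((Ψ k).image (fun ψ => t*K + ψ)).card = d := by
  rw [Finset.card_image_of_injective _ (add_right_injective (t*K))]
  exact hcard k (Finset.mem_Icc.mpr ⟨hk1, hkK⟩)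

lemma step_formula (hK : 1 ≤ K) (hd : 2 ≤ d) (hcd : c < d)
    (hsub : ∀ k ∈ Finset.Icc 1 K, Ψ k ⊆ Finset.Icc 1 K)
    (hcard : ∀ k ∈ Finset.Icc 1 K, (Ψ k).card = d)
    {t : ℕ} (IH : GenFacts K d c Ψ t)
    {k : ℕ} (hk1 : 1 ≤ k) (hkK : k ≤ K) (m : ℕ) :
    eqW (genNet K Ψ) ((t+1)*K+k) m
      = (if m = (t+1)*K+k then 1 else 0)
        + (rr d c t / ss d c t) *
            ∑ j ∈ (Ψ k).image (fun ψ => t*K + ψ), eqW (genNet K Ψ) j m := by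
  have hd1 : 1 ≤ d := le_trans one_le_two hd
  have hmul : (t+1)*K = t*K + K := by ring
  obtain ⟨hrt, hbt, hut⟩ := rb_pos hd1 hcd t
  have hd1' : (1:ℝ) ≤ (d:ℝ) := by exact_mod_cast hd1
  have hr1 : (1:ℝ) ≤ rr d c t := by
    have : (0:ℝ) ≤ (t:ℝ) := Nat.cast_nonneg t
    linarith
  have hss : ss d c t = rr d c t + ((d:ℝ)-1) * bb d c t := rfl
  have hs1 : (1:ℝ) ≤ ss d c t := by
    have : 0 ≤ ((d:ℝ)-1) * bb d c t := mul_nonneg (by linarith) hbt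
    rw [hss]; linarith
  have hsne : ss d c t ≠ 0 := by linarith
  have hune : rr d c t - bb d c t ≠ 0 := by linarith
  set net := genNet K Ψ with hnet
  set i := (t+1)*K + k with hi
  set E := (Ψ k).image (fun ψ => t*K + ψ) with hE
  have hnb : nbh net i = E := nbh_gen hK hsub hk1 hkK
  have hcardE : E.card = d := card_E hcard hk1 hkK
  have hne : (nbh net i).Nonempty := by
    rw [hnb, ← Finset.card_pos, hcardE]; omega
  -- facts about previous generation members
  have hWj : ∀ j ∈ E, eqW net j 0 = 0 ∧ (∀ m', j < m' → eqW net j m' = 0) ∧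
      (∑ m' ∈ Finset.range (j+1), eqW net j m' = rr d c t) ∧ j ≤ t*K + K ∧ 1 ≤ j := by
    intro j hj
    obtain ⟨ψ, hψΨ, hψ1, hψK, rfl⟩ := mem_E hsub hk1 hkK hj
    obtain ⟨h0, hgt, hsum, _⟩ := IH ψ hψ1 hψK
    exact ⟨h0, hgt, hsum, by omega, by omega⟩
  -- row sums
  have hrowsum : ∀ j : {j // j ∈ nbh net i},
      (∑ m' : Fin (i-1), WhatM net i j m') = rr d c t := by
    intro j
    have hj : j.1 ∈ E := hnb ▸ j.2
    obtain ⟨h0, hgt, hsum, hjle, hj1⟩ := hWj j.1 hj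
    show ∑ m' : Fin (i-1), eqW net j.1 (m'.1+1) = rr d c t
    rw [Fin.sum_univ_eq_sum_range (fun m' => eqW net j.1 (m'+1)) (i-1)]
    rw [sum_range_shift h0]
    rw [sum_range_cut hgt (by omega : j.1 ≤ i - 1)]
    exact hsum
  -- Gram matrix
  have hGram : WhatM net i * (WhatM net i).transpose
      = Matrix.of (fun j j' : {j // j ∈ nbh net i} =>
          if j = j' then rr d c t else bb d c t) := by
    ext j j'
    rw [Matrix.mul_apply]
    simp only [Matrix.transpose_apply, WhatM, Matrix.of_apply]
    have hj : j.1 ∈ E := hnb ▸ j.2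
    have hj' : j'.1 ∈ E := hnb ▸ j'.2
    obtain ⟨ψ, hψΨ, hψ1, hψK, hjeq⟩ := mem_E hsub hk1 hkK hj
    obtain ⟨ψ', hψ'Ψ, hψ'1, hψ'K, hj'eq⟩ := mem_E hsub hk1 hkK hj'
    obtain ⟨h0, hgt, _, hjle, _⟩ := hWj j.1 hj
    obtain ⟨h0', hgt', _, hj'le, _⟩ := hWj j'.1 hj'
    have hprod0 : (fun m => eqW net j.1 m * eqW net j'.1 m) 0 = 0 := by
      simp only; rw [h0]; ring
    have hprodgt : ∀ m, t*K+K < m → eqW net j.1 m * eqW net j'.1 m = 0 := by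
      intro m hm; rw [hgt m (by omega)]; ring
    rw [Fin.sum_univ_eq_sum_range (fun m' => eqW net j.1 (m'+1) * eqW net j'.1 (m'+1)) (i-1)]
    rw [sum_range_shift (f := fun m => eqW net j.1 m * eqW net j'.1 m) hprod0]
    rw [sum_range_cut (f := fun m => eqW net j.1 m * eqW net j'.1 m) hprodgt
      (by omega : t*K+K ≤ i - 1)]
    obtain ⟨_, _, _, hpair⟩ := IH ψ hψ1 hψK
    rw [hjeq, hj'eq]
    rw [hpair ψ' hψ'1 hψ'K]
    have hiff : ψ = ψ' ↔ j = j' := by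
      rw [Subtype.ext_iff, hjeq, hj'eq]; omega
    exact if_congr hiff rfl rfl
  have hcardι : (Fintype.card {j // j ∈ nbh net i} : ℝ) = d := by
    rw [Fintype.card_coe, hnb, hcardE]
  -- inverse of the Gram matrix
  set u : ℝ := rr d c t - bb d c t with hu
  set p : ℝ := (ss d c t - bb d c t)/(u * ss d c t) with hp
  set q : ℝ := -(bb d c t)/(u * ss d c t) with hq
  have hGinv : (WhatM net i * (WhatM net i).transpose)⁻¹
      = Matrix.of (fun j j' : {j // j ∈ nbh net i} => if j = j' then p else q) := by
    apply Matrix.inv_eq_right_inv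
    rw [hGram]
    ext j j'
    rw [sym_mul_apply, hcardι, Matrix.one_apply]
    have hdbu : (d:ℝ) * bb d c t + u = ss d c t := by rw [hu, hss]; ring
    rcases eq_or_ne j j' with h | h
    · simp only [h, if_true]
      rw [hp, hq]
      field_simp
      rw [hss, hu]; ring
    · simp only [h, if_false]
      rw [hp, hq]
      field_simp
      rw [hss, hu]; ring
  -- beta vector
  have hbeta : ∀ j : {j // j ∈ nbh net i}, betaV net i j = rr d c t / ss d c t := by
    intro j
    unfold betaV
    rw [hGinv]
    simp only [Matrix.vecMul, dotProduct, Matrix.of_apply]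
    rw [Finset.sum_congr rfl (fun j' _ => by rw [hrowsum j'])]
    rw [← Finset.mul_sum, sum_ite_subtype p q j, hcardι]
    have : (d:ℝ) * q + (p - q) = 1 / ss d c t := by
      rw [hp, hq]
      field_simp
      rw [hss]; ring
    rw [this]
    ring
  -- final formula
  rw [eqW_of_nonempty hne]
  simp only [hbeta]
  rw [← Finset.mul_sum]
  congr 1
  rw [← hnb]
  exact congrArg _ (Finset.sum_coe_sort (nbh net i) (fun j => eqW net j m))
end D


section D2
variable {K d c : ℕ} {Ψ : ℕ → Finset ℕ}

lemma prev_facts (hsub : ∀ k ∈ Finset.Icc 1 K, Ψ k ⊆ Finset.Icc 1 K)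
    {t : ℕ} (IH : GenFacts K d c Ψ t) {k : ℕ} (hk1 : 1 ≤ k) (hkK : k ≤ K) :
    ∀ j ∈ (Ψ k).image (fun ψ => t*K + ψ),
      eqW (genNet K Ψ) j 0 = 0 ∧ (∀ m', j < m' → eqW (genNet K Ψ) j m' = 0) ∧
      (∑ m' ∈ Finset.range (j+1), eqW (genNet K Ψ) j m' = rr d c t) ∧ j ≤ t*K + K ∧ 1 ≤ j := by
  intro j hj
  obtain ⟨ψ, hψΨ, hψ1, hψK, rfl⟩ := mem_E hsub hk1 hkK hj
  obtain ⟨h0, hgt, hsum, _⟩ := IH ψ hψ1 hψK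
  exact ⟨h0, hgt, hsum, by omega, by omega⟩

lemma master (hK : 1 ≤ K) (hd : 2 ≤ d) (hcd : c < d)
    (hsub : ∀ k ∈ Finset.Icc 1 K, Ψ k ⊆ Finset.Icc 1 K)
    (hcard : ∀ k ∈ Finset.Icc 1 K, (Ψ k).card = d)
    (hinter : ∀ k₁ ∈ Finset.Icc 1 K, ∀ k₂ ∈ Finset.Icc 1 K, k₁ ≠ k₂ →
      ((Ψ k₁) ∩ (Ψ k₂)).card = c) :
    ∀ t, GenFacts K d c Ψ t := by
  intro t
  induction t with
  | zero =>
    intro k hk1 hkK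
    have hWf : ∀ k0, k0 ≤ K → eqW (genNet K Ψ) (0*K+k0)
        = fun m => if m = k0 then (1:ℝ) else 0 := by
      intro k0 hk0
      rw [show 0*K+k0 = k0 from by omega]
      exact eqW_of_empty (by rw [nbh_first hk0]; simp)
    refine ⟨?_, ?_, ?_, ?_⟩
    · simp only [hWf k hkK]
      exact if_neg (by omega)
    · intro m hm
      simp only [hWf k hkK]
      exact if_neg (by omega)
    · simp only [hWf k hkK]
      rw [Finset.sum_ite_eq' (Finset.range (0*K+k+1)) k (fun _ => (1:ℝ))]
      rw [if_pos (Finset.mem_range.mpr (by omega))]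
      rfl
    · intro k' hk'1 hk'K
      simp only [hWf k hkK, hWf k' hk'K]
      have hpt : ∀ m, (if m = k then (1:ℝ) else 0) * (if m = k' then 1 else 0)
          = if m = k then (if k = k' then (1:ℝ) else 0) else 0 := by
        intro m
        by_cases h1 : m = k
        · subst h1
          by_cases h2 : m = k' <;> simp [h2]
        · simp [h1]
      simp only [hpt]
      rw [Finset.sum_ite_eq' (Finset.range (0*K+K+1)) k (fun _ => if k = k' then (1:ℝ) else 0)]
      rw [if_pos (Finset.mem_range.mpr (by omega))]
      rcases eq_or_ne k k' with h | h <;> simp [h, rr_zero, bb_zero]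
  | succ t IH =>
    intro k hk1 hkK
    have hd1 : 1 ≤ d := le_trans one_le_two hd
    have hmul : (t+1)*K = t*K + K := by ring
    obtain ⟨hrt, hbt, hut⟩ := rb_pos hd1 hcd t
    have hd1' : (1:ℝ) ≤ (d:ℝ) := by exact_mod_cast hd1
    have hr1 : (1:ℝ) ≤ rr d c t := by
      have : (0:ℝ) ≤ (t:ℝ) := Nat.cast_nonneg t
      linarith
    have hss : ss d c t = rr d c t + ((d:ℝ)-1) * bb d c t := rfl
    have hs1 : (1:ℝ) ≤ ss d c t := by
      have : 0 ≤ ((d:ℝ)-1) * bb d c t := mul_nonneg (by linarith) hbt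
      rw [hss]; linarith
    have hsne : ss d c t ≠ 0 := by linarith
    set net := genNet K Ψ with hnet
    set i := (t+1)*K + k with hi
    set E := (Ψ k).image (fun ψ => t*K + ψ) with hE
    have hsf : ∀ m, eqW net i m = (if m = i then (1:ℝ) else 0)
        + (rr d c t / ss d c t) * ∑ j ∈ E, eqW net j m :=
      step_formula hK hd hcd hsub hcard IH hk1 hkK
    have hcardE : E.card = d := card_E hcard hk1 hkK
    have hWj := prev_facts hsub IH hk1 hkK
    refine ⟨?_, ?_, ?_, ?_⟩
    · rw [hsf 0, if_neg (by omega : ¬ (0:ℕ) = i)]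
      rw [Finset.sum_eq_zero (fun j hj => (hWj j hj).1)]
      ring
    · intro m hm
      rw [hsf m, if_neg (by omega : ¬ m = i)]
      rw [Finset.sum_eq_zero (fun j hj => (hWj j hj).2.1 m
        (by have := (hWj j hj).2.2.2.1; omega))]
      ring
    · rw [Finset.sum_congr rfl (fun m _ => hsf m), Finset.sum_add_distrib]
      have h1 : ∑ m ∈ Finset.range (i+1), (if m = i then (1:ℝ) else 0) = 1 := by
        rw [Finset.sum_ite_eq' (Finset.range (i+1)) i (fun _ => (1:ℝ))]
        rw [if_pos (Finset.mem_range.mpr (by omega))]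
      have h2 : ∑ m ∈ Finset.range (i+1), (rr d c t / ss d c t * ∑ j ∈ E, eqW net j m)
          = rr d c t / ss d c t * ((d:ℝ) * rr d c t) := by
        rw [← Finset.mul_sum]
        congr 1
        rw [Finset.sum_comm]
        have hrow : ∀ j ∈ E, ∑ m ∈ Finset.range (i+1), eqW net j m = rr d c t := by
          intro j hj
          obtain ⟨h0, hgt, hsum, hle, hj1⟩ := hWj j hj
          rw [sum_range_cut (f := eqW net j) hgt (by omega : j ≤ i)]
          exact hsum
        rw [Finset.sum_congr rfl hrow, Finset.sum_const, hcardE, nsmul_eq_mul]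
      rw [h1, h2, rr_succ]
      ring
    · intro k' hk'1 hk'K
      set i' := (t+1)*K + k' with hi'
      set E' := (Ψ k').image (fun ψ => t*K + ψ) with hE'
      have hsf' : ∀ m, eqW net i' m = (if m = i' then (1:ℝ) else 0)
          + (rr d c t / ss d c t) * ∑ j ∈ E', eqW net j m :=
        step_formula hK hd hcd hsub hcard IH hk'1 hk'K
      have hcardE' : E'.card = d := card_E hcard hk'1 hk'K
      have hWj' := prev_facts hsub IH hk'1 hk'K
      set β := rr d c t / ss d c t with hβ
      set M := (t+1)*K + K with hM
      rw [Finset.sum_congr rfl (fun m _ => by rw [hsf m, hsf' m])]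
      have expand : ∀ m ∈ Finset.range (M+1),
          ((if m = i then (1:ℝ) else 0) + β * ∑ j ∈ E, eqW net j m) *
            ((if m = i' then (1:ℝ) else 0) + β * ∑ j ∈ E', eqW net j m)
          = ((if m = i then (1:ℝ) else 0) * (if m = i' then (1:ℝ) else 0)
            + (if m = i then (1:ℝ) else 0) * (β * ∑ j ∈ E', eqW net j m))
            + ((β * ∑ j ∈ E, eqW net j m) * (if m = i' then (1:ℝ) else 0)
            + (β * ∑ j ∈ E, eqW net j m) * (β * ∑ j ∈ E', eqW net j m)) := by
        intro m _; ring
      rw [Finset.sum_congr rfl expand, Finset.sum_add_distrib, Finset.sum_add_distrib,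
        Finset.sum_add_distrib]
      have hT1 : ∑ m ∈ Finset.range (M+1),
          (if m = i then (1:ℝ) else 0) * (if m = i' then (1:ℝ) else 0)
          = if k = k' then (1:ℝ) else 0 := by
        have hpt : ∀ m, (if m = i then (1:ℝ) else 0) * (if m = i' then (1:ℝ) else 0)
            = if m = i then (if k = k' then (1:ℝ) else 0) else 0 := by
          intro m
          by_cases h1 : m = i
          · subst h1
            by_cases h2 : k = k'
            · have h3 : i = i' := by omega
              simp [h3, h2]
            · have h3 : i ≠ i' := by omega
              simp [h3, h2]
          · simp [h1]
        simp only [hpt]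
        rw [Finset.sum_ite_eq' (Finset.range (M+1)) i (fun _ => if k = k' then (1:ℝ) else 0)]
        rw [if_pos (Finset.mem_range.mpr (by omega))]
      have hT2 : ∑ m ∈ Finset.range (M+1),
          (if m = i then (1:ℝ) else 0) * (β * ∑ j ∈ E', eqW net j m) = 0 := by
        have hpt : ∀ m, (if m = i then (1:ℝ) else 0) * (β * ∑ j ∈ E', eqW net j m)
            = if m = i then (β * ∑ j ∈ E', eqW net j m) else 0 := by
          intro m; by_cases h : m = i <;> simp [h]
        simp only [hpt]
        rw [Finset.sum_ite_eq' (Finset.range (M+1)) i (fun m => β * ∑ j ∈ E', eqW net j m)]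
        rw [if_pos (Finset.mem_range.mpr (by omega))]
        rw [Finset.sum_eq_zero (fun j hj => (hWj' j hj).2.1 i
          (by have := (hWj' j hj).2.2.2.1; omega))]
        ring
      have hT3 : ∑ m ∈ Finset.range (M+1),
          (β * ∑ j ∈ E, eqW net j m) * (if m = i' then (1:ℝ) else 0) = 0 := by
        have hpt : ∀ m, (β * ∑ j ∈ E, eqW net j m) * (if m = i' then (1:ℝ) else 0)
            = if m = i' then (β * ∑ j ∈ E, eqW net j m) else 0 := by
          intro m; by_cases h : m = i' <;> simp [h]
        simp only [hpt]
        rw [Finset.sum_ite_eq' (Finset.range (M+1)) i' (fun m => β * ∑ j ∈ E, eqW net j m)]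
        rw [if_pos (Finset.mem_range.mpr (by omega))]
        rw [Finset.sum_eq_zero (fun j hj => (hWj j hj).2.1 i'
          (by have := (hWj j hj).2.2.2.1; omega))]
        ring
      have hT4 : ∑ m ∈ Finset.range (M+1),
          (β * ∑ j ∈ E, eqW net j m) * (β * ∑ j ∈ E', eqW net j m)
          = β^2 * ((d:ℝ) * ((d:ℝ) * bb d c t)
              + (rr d c t - bb d c t) * (if k = k' then (d:ℝ) else (c:ℝ))) := by
        have hpt : ∀ m ∈ Finset.range (M+1),
            (β * ∑ j ∈ E, eqW net j m) * (β * ∑ j ∈ E', eqW net j m)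
            = β^2 * ∑ j ∈ E, ∑ j' ∈ E', eqW net j m * eqW net j' m := by
          intro m _
          rw [show (β * ∑ j ∈ E, eqW net j m) * (β * ∑ j ∈ E', eqW net j m)
            = β^2 * ((∑ j ∈ E, eqW net j m) * (∑ j ∈ E', eqW net j m)) from by ring]
          rw [Finset.sum_mul_sum]
        rw [Finset.sum_congr rfl hpt, ← Finset.mul_sum]
        congr 1
        rw [Finset.sum_comm]
        have hswap : ∀ j ∈ E, ∑ m ∈ Finset.range (M+1), ∑ j' ∈ E', eqW net j m * eqW net j' m
            = ∑ j' ∈ E', ∑ m ∈ Finset.range (M+1), eqW net j m * eqW net j' m :=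
          fun j _ => Finset.sum_comm
        rw [Finset.sum_congr rfl hswap]
        have hinner : ∀ j ∈ E, ∀ j' ∈ E',
            ∑ m ∈ Finset.range (M+1), eqW net j m * eqW net j' m
            = if j = j' then rr d c t else bb d c t := by
          intro j hj j' hj'
          obtain ⟨ψ, hψΨ, hψ1, hψK, hjeq⟩ := mem_E hsub hk1 hkK hj
          obtain ⟨ψ', hψ'Ψ, hψ'1, hψ'K, hj'eq⟩ := mem_E hsub hk'1 hk'K hj'
          obtain ⟨h0, hgt, _, hjle, _⟩ := hWj j hj
          have hprodgt : ∀ m, t*K+K < m → eqW net j m * eqW net j' m = 0 := by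
            intro m hm; rw [hgt m (by omega)]; ring
          rw [sum_range_cut (f := fun m => eqW net j m * eqW net j' m) hprodgt
            (by omega : t*K+K ≤ M)]
          obtain ⟨_, _, _, hpair⟩ := IH ψ hψ1 hψK
          rw [hjeq, hj'eq, hpair ψ' hψ'1 hψ'K]
          exact if_congr (by omega) rfl rfl
        rw [Finset.sum_congr rfl (fun j hj => Finset.sum_congr rfl (fun j' hj' =>
          hinner j hj j' hj'))]
        have hin : ∀ j ∈ E, ∑ j' ∈ E', (if j = j' then rr d c t else bb d c t)
            = (d:ℝ) * bb d c t + (if j ∈ E' then rr d c t - bb d c t else 0) := by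
          intro j _
          have hpt2 : ∀ j', (if j = j' then rr d c t else bb d c t)
              = bb d c t + (if j' = j then rr d c t - bb d c t else 0) := by
            intro j'
            rcases eq_or_ne j' j with h | h
            · subst h; simp
            · simp [h, Ne.symm h]
          rw [Finset.sum_congr rfl (fun j' _ => hpt2 j')]
          rw [Finset.sum_add_distrib, Finset.sum_const, hcardE', nsmul_eq_mul]
          rw [Finset.sum_ite_eq' E' j (fun _ => rr d c t - bb d c t)]
        rw [Finset.sum_congr rfl hin, Finset.sum_add_distrib, Finset.sum_const, hcardE,
          nsmul_eq_mul]
        congr 1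
        rw [Finset.sum_ite_mem, Finset.sum_const, nsmul_eq_mul]
        have hEE : (E ∩ E').card = if k = k' then d else c := by
          have hinj : Function.Injective (fun ψ => t*K + ψ) := add_right_injective (t*K)
          rw [hE, hE', ← Finset.image_inter _ _ hinj]
          rw [Finset.card_image_of_injective _ hinj]
          rcases eq_or_ne k k' with h | h
          · subst h
            rw [Finset.inter_self, hcard k (Finset.mem_Icc.mpr ⟨hk1, hkK⟩), if_pos rfl]
          · rw [hinter k (Finset.mem_Icc.mpr ⟨hk1, hkK⟩) k' (Finset.mem_Icc.mpr ⟨hk'1, hk'K⟩) h,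
              if_neg h]
        rw [hEE]
        rcases eq_or_ne k k' with h | h <;> simp [h] <;> ring
      rw [hT1, hT2, hT3, hT4]
      have hsne' : rr d c t + ((d:ℝ)-1)*bb d c t ≠ 0 := by rw [← hss]; exact hsne
      rcases eq_or_ne k k' with h | h
      · simp only [h, if_true]
        rw [hβ, rr_succ, hss]
        field_simp
        ring
      · simp only [h, if_false]
        rw [hβ, bb_succ]
        ring
end D2


section E
variable {d c : ℕ}

lemma rr_pos (hd : 1 ≤ d) (hcd : c < d) (t : ℕ) : 0 < rr d c t := by
  obtain ⟨hr, _, _⟩ := rb_pos hd hcd t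
  have : (0:ℝ) ≤ (t:ℝ) := Nat.cast_nonneg t
  linarith

lemma ss_pos (hd : 1 ≤ d) (hcd : c < d) (t : ℕ) : 0 < ss d c t := by
  obtain ⟨hr, hb, _⟩ := rb_pos hd hcd t
  have hd1 : (1:ℝ) ≤ (d:ℝ) := by exact_mod_cast hd
  have h1 : 0 ≤ ((d:ℝ)-1) * bb d c t := mul_nonneg (by linarith) hb
  have : (0:ℝ) ≤ (t:ℝ) := Nat.cast_nonneg t
  show (0:ℝ) < rr d c t + ((d:ℝ)-1) * bb d c t
  linarith

lemma ss_ge_rr (hd : 1 ≤ d) (hcd : c < d) (t : ℕ) : rr d c t ≤ ss d c t := by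
  obtain ⟨hr, hb, _⟩ := rb_pos hd hcd t
  have hd1 : (1:ℝ) ≤ (d:ℝ) := by exact_mod_cast hd
  have h1 : 0 ≤ ((d:ℝ)-1) * bb d c t := mul_nonneg (by linarith) hb
  show rr d c t ≤ rr d c t + ((d:ℝ)-1) * bb d c t
  linarith

lemma uu_succ (hd : 1 ≤ d) (hcd : c < d) (t : ℕ) :
    rr d c (t+1) - bb d c (t+1)
      = 1 + ((d:ℝ) - c) * (rr d c t / ss d c t)^2 * (rr d c t - bb d c t) := by
  have hsne : ss d c t ≠ 0 := ne_of_gt (ss_pos hd hcd t)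
  rw [rr_succ, bb_succ]
  field_simp
  show _ = _ 
  rw [show ss d c t = rr d c t + ((d:ℝ)-1) * bb d c t from rfl]
  ring

lemma delta_succ (hd : 1 ≤ d) (hcd : c < d) (t : ℕ) :
    rr d c (t+1) - rr d c t
      = 1 + ((d:ℝ) - 1) * (rr d c t - bb d c t) * (rr d c t / ss d c t) := by
  have hsne : ss d c t ≠ 0 := ne_of_gt (ss_pos hd hcd t)
  rw [rr_succ]
  field_simp
  rw [show ss d c t = rr d c t + ((d:ℝ)-1) * bb d c t from rfl]
  ring

lemma tendsto_y (hd : 2 ≤ d) (hcd : c < d) (hc1 : 1 ≤ c) :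
    Filter.Tendsto (fun t => (rr d c t - bb d c t) / rr d c t)
      Filter.atTop (nhds 0) := by
  have hd1 : 1 ≤ d := le_trans one_le_two hd
  have hd1' : (1:ℝ) ≤ (d:ℝ) := by exact_mod_cast hd1
  have hc1' : (1:ℝ) ≤ (c:ℝ) := by exact_mod_cast hc1
  have hcd' : (c:ℝ) + 1 ≤ (d:ℝ) := by exact_mod_cast hcd
  apply tendsto_zero_of_contract _ (fun t => 1/((t:ℝ)+2)) (((d:ℝ)-c)/d)
  · apply div_nonneg (by linarith) (by linarith)
  · rw [div_lt_one (by linarith)]; linarith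
  · intro t
    obtain ⟨hr, hb, hu⟩ := rb_pos hd1 hcd t
    have hr0 := rr_pos hd1 hcd t
    exact div_nonneg (by linarith) hr0.le
  · have h1 : Filter.Tendsto (fun t : ℕ => (t:ℝ)+2) Filter.atTop Filter.atTop :=
      Filter.tendsto_atTop_add_const_right _ 2 tendsto_natCast_atTop_atTop
    have := (tendsto_inv_atTop_zero).comp h1
    simpa [Function.comp_def, one_div] using this
  · apply Filter.Eventually.of_forall
    intro t
    obtain ⟨hr, hb, hu⟩ := rb_pos hd1 hcd t
    have hr0 := rr_pos hd1 hcd t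
    have hs0 := ss_pos hd1 hcd t
    have hsr := ss_ge_rr hd1 hcd t
    obtain ⟨hr', hb', hu'⟩ := rb_pos hd1 hcd (t+1)
    have hr'0 := rr_pos hd1 hcd (t+1)
    have hrt2 : ((t:ℝ)+2) ≤ rr d c (t+1) := by push_cast at hr' ⊢; linarith
    have key1 : (1:ℝ) / rr d c (t+1) ≤ 1/((t:ℝ)+2) := by
      apply one_div_le_one_div_of_le (by positivity) hrt2
    have hdrs : (0:ℝ) < (d:ℝ) * rr d c t^2 / ss d c t := by positivity
    have hr'ge : (d:ℝ) * rr d c t^2 / ss d c t ≤ rr d c (t+1) := by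
      rw [rr_succ]; linarith
    have hnum : (0:ℝ) ≤ ((d:ℝ)-c) * (rr d c t / ss d c t)^2 * (rr d c t - bb d c t) := by
      apply mul_nonneg (mul_nonneg (by linarith) (sq_nonneg _)) (by linarith)
    have key2 : ((d:ℝ)-c) * (rr d c t / ss d c t)^2 * (rr d c t - bb d c t) / rr d c (t+1)
        ≤ ((d:ℝ)-c)/d * ((rr d c t - bb d c t)/ rr d c t) := by
      have step1 : ((d:ℝ)-c) * (rr d c t / ss d c t)^2 * (rr d c t - bb d c t) / rr d c (t+1)
          ≤ ((d:ℝ)-c) * (rr d c t / ss d c t)^2 * (rr d c t - bb d c t)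
            / ((d:ℝ) * rr d c t^2 / ss d c t) :=
        div_le_div_of_nonneg_left hnum hdrs hr'ge
      have step2 : ((d:ℝ)-c) * (rr d c t / ss d c t)^2 * (rr d c t - bb d c t)
            / ((d:ℝ) * rr d c t^2 / ss d c t)
          = ((d:ℝ)-c) * (rr d c t - bb d c t) / ((d:ℝ) * ss d c t) := by
        field_simp
      have step3 : ((d:ℝ)-c) * (rr d c t - bb d c t) / ((d:ℝ) * ss d c t)
          ≤ ((d:ℝ)-c) * (rr d c t - bb d c t) / ((d:ℝ) * rr d c t) := by
        apply div_le_div_of_nonneg_left (mul_nonneg (by linarith) (by linarith))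
          (by positivity) (by nlinarith)
      have step4 : ((d:ℝ)-c) * (rr d c t - bb d c t) / ((d:ℝ) * rr d c t)
          = ((d:ℝ)-c)/d * ((rr d c t - bb d c t)/ rr d c t) := by
        field_simp
      linarith
    calc (rr d c (t+1) - bb d c (t+1)) / rr d c (t+1)
        = (1 + ((d:ℝ) - c) * (rr d c t / ss d c t)^2 * (rr d c t - bb d c t)) / rr d c (t+1) := by
          rw [uu_succ hd1 hcd t]
      _ = 1/rr d c (t+1)
          + ((d:ℝ) - c) * (rr d c t / ss d c t)^2 * (rr d c t - bb d c t) / rr d c (t+1) := by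
          rw [add_div]
      _ ≤ ((d:ℝ)-c)/d * ((rr d c t - bb d c t)/ rr d c t) + 1/((t:ℝ)+2) := by linarith
end E


section E2
variable {d c : ℕ}

lemma tendsto_ratio (hd : 2 ≤ d) (hcd : c < d) (hc1 : 1 ≤ c) :
    Filter.Tendsto (fun t => rr d c t / ss d c t) Filter.atTop (nhds (1/(d:ℝ))) := by
  have hd1 : 1 ≤ d := le_trans one_le_two hd
  have hd1' : (1:ℝ) ≤ (d:ℝ) := by exact_mod_cast hd1
  have hy := tendsto_y hd hcd hc1
  have hbr : Filter.Tendsto (fun t => bb d c t / rr d c t) Filter.atTop (nhds 1) := by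
    have h1 : Filter.Tendsto (fun t => 1 - (rr d c t - bb d c t) / rr d c t)
        Filter.atTop (nhds (1 - 0)) := (tendsto_const_nhds).sub hy
    rw [sub_zero] at h1
    apply h1.congr
    intro t
    have hr0 := rr_pos hd1 hcd t
    field_simp
    ring
  have hsr : Filter.Tendsto (fun t => ss d c t / rr d c t) Filter.atTop (nhds (d:ℝ)) := by
    have h1 : Filter.Tendsto (fun t => 1 + ((d:ℝ)-1) * (bb d c t / rr d c t))
        Filter.atTop (nhds (1 + ((d:ℝ)-1) * 1)) :=
      (tendsto_const_nhds).add ((tendsto_const_nhds).mul hbr)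
    have h2 : (1 + ((d:ℝ)-1) * 1) = (d:ℝ) := by ring
    rw [h2] at h1
    apply h1.congr
    intro t
    have hr0 := rr_pos hd1 hcd t
    rw [show ss d c t = rr d c t + ((d:ℝ)-1)*bb d c t from rfl]
    field_simp
  have hinv := hsr.inv₀ (by positivity : (d:ℝ) ≠ 0)
  rw [← one_div] at hinv
  apply hinv.congr
  intro t
  have hr0 := rr_pos hd1 hcd t
  have hs0 := ss_pos hd1 hcd t
  rw [inv_div]

lemma tendsto_uu (hd : 2 ≤ d) (hcd : c < d) (hc1 : 1 ≤ c) :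
    Filter.Tendsto (fun t => rr d c t - bb d c t) Filter.atTop
      (nhds ((1 - ((d:ℝ) - c) * (1/(d:ℝ))^2)⁻¹)) := by
  have hd1 : 1 ≤ d := le_trans one_le_two hd
  have hd2' : (2:ℝ) ≤ (d:ℝ) := by exact_mod_cast hd
  have hc1' : (1:ℝ) ≤ (c:ℝ) := by exact_mod_cast hc1
  have hcd' : (c:ℝ) + 1 ≤ (d:ℝ) := by exact_mod_cast hcd
  set lam : ℝ := ((d:ℝ) - c) * (1/(d:ℝ))^2 with hlam
  have hlam0 : 0 ≤ lam := by
    apply mul_nonneg (by linarith) (sq_nonneg _)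
  have hlamhalf : lam ≤ 1/2 := by
    rw [hlam]
    rw [div_pow, one_pow, mul_one_div, div_le_div_iff₀ (by positivity) (by norm_num)]
    nlinarith
  set ustar : ℝ := (1 - lam)⁻¹ with hustar
  have h1lam : (0:ℝ) < 1 - lam := by linarith
  have hustar0 : 0 ≤ ustar := by positivity
  have hfix : 1 + lam * ustar - ustar = 0 := by
    have h2 : (1 - lam) * ustar = 1 := by
      rw [hustar]; exact mul_inv_cancel₀ (ne_of_gt h1lam)
    nlinarith [h2]
  have hlamT : Filter.Tendsto (fun t => ((d:ℝ) - c) * (rr d c t / ss d c t)^2)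
      Filter.atTop (nhds lam) :=
    (tendsto_const_nhds).mul ((tendsto_ratio hd hcd hc1).pow 2)
  have hz : Filter.Tendsto (fun t => |(rr d c t - bb d c t) - ustar|)
      Filter.atTop (nhds 0) := by
    apply tendsto_zero_of_contract _
      (fun t => |((d:ℝ) - c) * (rr d c t / ss d c t)^2 - lam| * ustar) (3/4)
      (by norm_num) (by norm_num) (fun t => abs_nonneg _)
    · have h1 : Filter.Tendsto (fun t => |((d:ℝ) - c) * (rr d c t / ss d c t)^2 - lam|)
          Filter.atTop (nhds 0) := by
        have := (hlamT.sub (tendsto_const_nhds (x := lam))).abs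
        simpa using this
      have := h1.mul_const ustar
      simpa using this
    · have hev : ∀ᶠ t in Filter.atTop,
          ((d:ℝ) - c) * (rr d c t / ss d c t)^2 ≤ 3/4 :=
        hlamT.eventually (eventually_le_nhds (by linarith))
      filter_upwards [hev] with t hlt
      have hlamt0 : 0 ≤ ((d:ℝ) - c) * (rr d c t / ss d c t)^2 :=
        mul_nonneg (by linarith) (sq_nonneg _)
      have hkey : rr d c (t+1) - bb d c (t+1) - ustar
          = (((d:ℝ) - c) * (rr d c t / ss d c t)^2) * ((rr d c t - bb d c t) - ustar)
            + (((d:ℝ) - c) * (rr d c t / ss d c t)^2 - lam) * ustar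
            + (1 + lam * ustar - ustar) := by
        rw [uu_succ hd1 hcd t]
        ring
      rw [hkey, hfix, add_zero]
      calc |(((d:ℝ) - c) * (rr d c t / ss d c t)^2) * ((rr d c t - bb d c t) - ustar)
            + (((d:ℝ) - c) * (rr d c t / ss d c t)^2 - lam) * ustar|
          ≤ |(((d:ℝ) - c) * (rr d c t / ss d c t)^2) * ((rr d c t - bb d c t) - ustar)|
            + |(((d:ℝ) - c) * (rr d c t / ss d c t)^2 - lam) * ustar| := abs_add_le _ _
        _ ≤ 3/4 * |(rr d c t - bb d c t) - ustar|
            + |((d:ℝ) - c) * (rr d c t / ss d c t)^2 - lam| * ustar := by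
            have e1 : |(((d:ℝ) - c) * (rr d c t / ss d c t)^2) * ((rr d c t - bb d c t) - ustar)|
                = (((d:ℝ) - c) * (rr d c t / ss d c t)^2) * |(rr d c t - bb d c t) - ustar| := by
              rw [abs_mul, abs_of_nonneg hlamt0]
            have e2 : |(((d:ℝ) - c) * (rr d c t / ss d c t)^2 - lam) * ustar|
                = |((d:ℝ) - c) * (rr d c t / ss d c t)^2 - lam| * ustar := by
              rw [abs_mul, abs_of_nonneg hustar0]
            rw [e1, e2]
            have h2 : (0:ℝ) ≤ |rr d c t - bb d c t - ustar| := abs_nonneg _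
            nlinarith
  have hsub : Filter.Tendsto (fun t => (rr d c t - bb d c t) - ustar)
      Filter.atTop (nhds 0) := by
    apply squeeze_zero_norm _ hz
    intro t
    exact le_refl _
  have := hsub.add (tendsto_const_nhds (x := ustar))
  rw [zero_add] at this
  apply this.congr
  intro t
  ring

lemma tendsto_rr_div (hd : 2 ≤ d) (hcd : c < d) (hc1 : 1 ≤ c) :
    Filter.Tendsto (fun t : ℕ => rr d c t / t) Filter.atTop
      (nhds (1 + ((d:ℝ) - 1) * (1 - ((d:ℝ) - c) * (1/(d:ℝ))^2)⁻¹ * (1/(d:ℝ)))) := by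
  have hd1 : 1 ≤ d := le_trans one_le_two hd
  set gam : ℝ := 1 + ((d:ℝ) - 1) * (1 - ((d:ℝ) - c) * (1/(d:ℝ))^2)⁻¹ * (1/(d:ℝ)) with hgam
  have hΔ : Filter.Tendsto (fun t => rr d c (t+1) - rr d c t) Filter.atTop (nhds gam) := by
    have h1 : Filter.Tendsto
        (fun t => 1 + ((d:ℝ) - 1) * (rr d c t - bb d c t) * (rr d c t / ss d c t))
        Filter.atTop (nhds gam) := by
      rw [hgam]
      exact (tendsto_const_nhds).add
        (((tendsto_const_nhds).mul (tendsto_uu hd hcd hc1)).mul (tendsto_ratio hd hcd hc1))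
    apply h1.congr
    intro t
    rw [delta_succ hd1 hcd t]
  have hc := hΔ.cesaro
  have htel : ∀ n : ℕ, ∑ i ∈ Finset.range n, (rr d c (i+1) - rr d c i)
      = rr d c n - 1 := by
    intro n
    rw [Finset.sum_range_sub (f := rr d c), rr_zero]
  have hc2 : Filter.Tendsto (fun n : ℕ => (n:ℝ)⁻¹ * (rr d c n - 1))
      Filter.atTop (nhds gam) := by
    apply hc.congr
    intro n
    rw [htel n]
  have hinv : Filter.Tendsto (fun n : ℕ => ((n:ℝ))⁻¹) Filter.atTop (nhds 0) := by
    exact tendsto_inv_atTop_nhds_zero_nat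
  have := hc2.add hinv
  rw [add_zero] at this
  apply this.congr
  intro n
  rw [div_eq_mul_inv]
  ring
end E2


/-- In any generations network with generation size `K` associated
to symmetric observation sets with parameters `(d, c)` satisfying `d ≥ 2` and
`c < d`, the aggregative efficiency exists and equals `(2 − 1/K)·(1/K)`; in
particular it depends only on `K` and coincides with the aggregative efficiency of
the maximal generations network with the same `K`. -/
theorem symmetric_generations_efficiency_cancellation (K d c : ℕ) (hK : 1 ≤ K)
    (hd : 2 ≤ d) (hcd : c < d) (Ψ : ℕ → Finset ℕ)
    (hsub : ∀ k ∈ Finset.Icc 1 K, Ψ k ⊆ Finset.Icc 1 K)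
    (hcard : ∀ k ∈ Finset.Icc 1 K, (Ψ k).card = d)
    (hinter : ∀ k₁ ∈ Finset.Icc 1 K, ∀ k₂ ∈ Finset.Icc 1 K, k₁ ≠ k₂ →
      ((Ψ k₁) ∩ (Ψ k₂)).card = c) :
    Tendsto (fun i : ℕ => rcount (genNet K Ψ) i / (i : ℝ)) atTop
      (nhds ((2 - 1 / (K : ℝ)) * (1 / (K : ℝ)))) := by
  have hd1 : 1 ≤ d := le_trans one_le_two hd
  have hKd : d ≤ K := by
    have h1 : (1:ℕ) ∈ Finset.Icc 1 K := Finset.mem_Icc.mpr ⟨le_refl 1, hK⟩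
    have h2 := Finset.card_le_card (hsub 1 h1)
    rwa [hcard 1 h1, Nat.card_Icc, Nat.add_sub_cancel] at h2
  have hK2 : 2 ≤ K := le_trans hd hKd
  have hiden := design_identity hK hd hcd hsub hcard hinter
  have hK2' : (2:ℝ) ≤ (K:ℝ) := by exact_mod_cast hK2
  have hd2' : (2:ℝ) ≤ (d:ℝ) := by exact_mod_cast hd
  have hc1 : 1 ≤ c := by
    by_contra h
    have hc0 : (c:ℝ) = 0 := by
      have : c = 0 := by omega
      rw [this]; norm_num
    rw [hc0] at hiden
    nlinarith [hiden]
  have hc1' : (1:ℝ) ≤ (c:ℝ) := by exact_mod_cast hc1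
  have hdne : (d:ℝ) ≠ 0 := by linarith
  have hKne : (K:ℝ) ≠ 0 := by linarith
  have hcne : (c:ℝ) ≠ 0 := by linarith
  have hgam : 1 + ((d:ℝ) - 1) * (1 - ((d:ℝ) - c) * (1/(d:ℝ))^2)⁻¹ * (1/(d:ℝ))
      = 2 - 1/(K:ℝ) := by
    have h1 : 1 - ((d:ℝ) - c) * (1/(d:ℝ))^2 = ((c:ℝ)*(K:ℝ))/(d:ℝ)^2 := by
      have h2 : (d:ℝ)^2 - d + c = c*K := by nlinarith [hiden]
      field_simp
      nlinarith [h2]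
    rw [h1, inv_div]
    have hcK : (c:ℝ)*(K:ℝ) ≠ 0 := by positivity
    field_simp
    linear_combination (-1:ℝ) * hiden
  have hmaster := master hK hd hcd hsub hcard hinter
  have hrc : ∀ i : ℕ, 1 ≤ i → rcount (genNet K Ψ) i = rr d c ((i-1)/K) := by
    intro i hi
    have hmod : (i-1) % K < K := Nat.mod_lt _ (by omega)
    have hdm := Nat.div_add_mod (i-1) K
    have hcomm : K * ((i-1)/K) = ((i-1)/K) * K := Nat.mul_comm _ _
    have hik : ((i-1)/K)*K + ((i-1) % K + 1) = i := by omega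
    obtain ⟨_, _, hsum, _⟩ := hmaster ((i-1)/K) ((i-1) % K + 1) (by omega) (by omega)
    rw [hik] at hsum
    unfold rcount
    exact hsum
  have htt : Filter.Tendsto (fun i : ℕ => (i-1)/K) Filter.atTop Filter.atTop := by
    rw [Filter.tendsto_atTop_atTop]
    intro b
    refine ⟨b*K+1, fun i hi => ?_⟩
    rw [Nat.le_div_iff_mul_le (by omega)]
    omega
  have h2 := (tendsto_rr_div hd hcd hc1).comp htt
  rw [hgam] at h2
  have hKpos : (0:ℝ) < (K:ℝ) := by linarith
  have h1 : Filter.Tendsto (fun i : ℕ => (((i-1)/K : ℕ):ℝ) / (i:ℝ))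
      Filter.atTop (nhds (1/(K:ℝ))) := by
    apply tendsto_of_tendsto_of_tendsto_of_le_of_le'
      (g := fun i : ℕ => 1/(K:ℝ) - 1/(i:ℝ)) (h := fun _ : ℕ => 1/(K:ℝ))
    · have ha : Filter.Tendsto (fun i : ℕ => 1/(i:ℝ)) Filter.atTop (nhds 0) := by
        simpa [one_div] using tendsto_inv_atTop_nhds_zero_nat
      have hb := (tendsto_const_nhds (x := 1/(K:ℝ))).sub ha
      simpa using hb
    · exact tendsto_const_nhds
    · filter_upwards [Filter.eventually_ge_atTop 1] with i hi
      have hi0 : (0:ℝ) < (i:ℝ) := by exact_mod_cast Nat.lt_of_lt_of_le Nat.zero_lt_one hi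
      have hub : i ≤ K * ((i-1)/K) + K := by
        have hdm := Nat.div_add_mod (i-1) K
        have hmod : (i-1) % K < K := Nat.mod_lt _ (by omega)
        omega
      have hcast : (i:ℝ) ≤ (K:ℝ) * (((i-1)/K : ℕ):ℝ) + K := by exact_mod_cast hub
      rw [sub_le_iff_le_add, ← add_div, div_le_div_iff₀ hKpos hi0]
      nlinarith [hcast]
    · filter_upwards [Filter.eventually_ge_atTop 1] with i hi
      have hi0 : (0:ℝ) < (i:ℝ) := by exact_mod_cast Nat.lt_of_lt_of_le Nat.zero_lt_one hi
      have hlb : ((i-1)/K) * K ≤ i := le_trans (Nat.div_mul_le_self (i-1) K) (by omega)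
      have hcast : (((i-1)/K : ℕ):ℝ) * K ≤ (i:ℝ) := by exact_mod_cast hlb
      rw [div_le_div_iff₀ hi0 hKpos]
      linarith
  have hprod := h2.mul h1
  apply Filter.Tendsto.congr' _ hprod
  filter_upwards [Filter.eventually_ge_atTop (K+1)] with i hi
  have ht1 : 1 ≤ (i-1)/K := by
    rw [Nat.le_div_iff_mul_le (by omega)]
    omega
  have htne : ((((i-1)/K : ℕ)):ℝ) ≠ 0 := by
    have : (1:ℝ) ≤ (((i-1)/K : ℕ):ℝ) := by exact_mod_cast ht1
    linarith
  show rr d c ((i-1)/K) / ((((i-1)/K : ℕ)):ℝ) * ((((i-1)/K : ℕ):ℝ) / (i:ℝ))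
      = rcount (genNet K Ψ) i / (i:ℝ)
  rw [hrc i (by omega)]
  rw [div_mul_div_comm, mul_comm ((((i-1)/K : ℕ)):ℝ) (i:ℝ)]
  rw [mul_div_mul_right _ _ htne]
end

section
/- Suppose the observation sets (Ψ_k)_{k=1}^K of a generations network are strongly connected and symmetric with parameters (d, c) where c ≥ 1. Then there exists a log-linear (but non-equilibrium) strategy profile — i.e. real coefficients b_{i,0} and (b_{i,j})_{j∈N(i)} defining weight vectors W′_i recursively by W′_i := b_{i,0}·e_i + Σ_{j∈N(i)} b_{i,j}·W′_j — such that every row satisfies the signal-counting identity Σ_j W′_i(j) = Σ_j (W′_i(j))², and for every positive real K₀ < K there exists T such that for all t ≥ T and all 1 ≤ k ≤ K, the agent i = (t−1)K+k satisfies Σ_j W′_i(j) > (t−1)K₀ (i.e. social learning under this profile aggregates more than (t−1)K₀ signals by agent (t−1)K+k). -/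
open Finset Filter

/-- There is a directed path in the network from `a` to `b`. -/
def HasPath (Net : ℕ → Finset ℕ) (a b : ℕ) : Prop :=
  ∃ (L : ℕ) (f : ℕ → ℕ), f 0 = a ∧ f L = b ∧ ∀ s < L, f (s + 1) ∈ Net (f s)


set_option maxHeartbeats 1000000

noncomputable def wgt (K : ℕ) (dr : ℝ) (Ψ : ℕ → Finset ℕ) (i : ℕ) : ℕ → ℝ :=
  fun m => (if m = i then 1 else 0)
    + dr * ∑ j ∈ ((genNet K Ψ i).filter (fun j => j < i)).attach, wgt K dr Ψ j.1 m
termination_by i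
decreasing_by exact (Finset.mem_filter.mp j.2).2

lemma wgt_apply (K : ℕ) (dr : ℝ) (Ψ : ℕ → Finset ℕ) (i m : ℕ) :
    wgt K dr Ψ i m = (if m = i then 1 else 0)
      + dr * ∑ j ∈ (genNet K Ψ i).filter (fun j => j < i), wgt K dr Ψ j m := by
  rw [wgt, Finset.sum_attach _ (fun j => wgt K dr Ψ j m)]

lemma wgt_zero (K : ℕ) (dr : ℝ) (Ψ : ℕ → Finset ℕ) :
    ∀ i m, i < m → wgt K dr Ψ i m = 0 := by
  intro i
  induction i using Nat.strong_induction_on with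
  | _ i ih =>
    intro m him
    rw [wgt_apply, if_neg (by omega), Finset.sum_eq_zero, mul_zero, add_zero]
    intro j hj
    have hj' := (Finset.mem_filter.mp hj).2
    exact ih j hj' m (lt_trans hj' him)

lemma wgt_nonneg (K : ℕ) (dr : ℝ) (hdr : 0 ≤ dr) (Ψ : ℕ → Finset ℕ) :
    ∀ i m, 0 ≤ wgt K dr Ψ i m := by
  intro i
  induction i using Nat.strong_induction_on with
  | _ i ih =>
    intro m
    rw [wgt_apply]
    have h1 : (0:ℝ) ≤ if m = i then 1 else 0 := by positivity
    refine add_nonneg h1 (mul_nonneg hdr (Finset.sum_nonneg fun j hj => ?_))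
    exact ih j (Finset.mem_filter.mp hj).2 m

lemma wgt_self (K : ℕ) (dr : ℝ) (Ψ : ℕ → Finset ℕ) (i : ℕ) :
    wgt K dr Ψ i i = 1 := by
  rw [wgt_apply, if_pos rfl, Finset.sum_eq_zero, mul_zero, add_zero]
  intro j hj
  exact wgt_zero K dr Ψ j i (Finset.mem_filter.mp hj).2

open Matrix in
lemma card_filter_fin (K : ℕ) (S : Finset ℕ) (hS : S ⊆ Finset.Icc 1 K) :
    ((Finset.univ : Finset (Fin K)).filter (fun (ψ : Fin K) => (ψ:ℕ)+1 ∈ S)).card = S.card := by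
  apply Finset.card_bij (fun (ψ : Fin K) _ => (ψ:ℕ)+1)
  · intro a ha; exact (Finset.mem_filter.mp ha).2
  · intro a _ b _ h; exact Fin.ext (by omega)
  · intro b hb
    have hb' := Finset.mem_Icc.mp (hS hb)
    refine ⟨⟨b-1, by omega⟩, Finset.mem_filter.mpr ⟨Finset.mem_univ _, ?_⟩, by simp; omega⟩
    show b - 1 + 1 ∈ S
    rw [Nat.sub_add_cancel hb'.1]; exact hb

open Matrix in
lemma design_identity_matrix (K d c : ℕ) (hK : 1 ≤ K) (hc : 1 ≤ c) (hcd : c < d)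
    (Ψ : ℕ → Finset ℕ)
    (hsub : ∀ k ∈ Finset.Icc 1 K, Ψ k ⊆ Finset.Icc 1 K)
    (hcard : ∀ k ∈ Finset.Icc 1 K, (Ψ k).card = d)
    (hinter : ∀ k₁ ∈ Finset.Icc 1 K, ∀ k₂ ∈ Finset.Icc 1 K, k₁ ≠ k₂ →
      ((Ψ k₁) ∩ (Ψ k₂)).card = c) :
    (c : ℝ) * ((K : ℝ) - 1) = (d : ℝ) * ((d : ℝ) - 1) := by
  have hd0 : (0:ℝ) < d := by
    have : (1:ℕ) ≤ d := le_of_lt (lt_of_le_of_lt hc hcd)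
    exact_mod_cast Nat.lt_of_lt_of_le Nat.zero_lt_one this
  have hK0 : (0:ℝ) < K := by exact_mod_cast hK
  set M : Matrix (Fin K) (Fin K) ℝ :=
    Matrix.of (fun k ψ : Fin K => if (ψ:ℕ)+1 ∈ Ψ ((k:ℕ)+1) then (1:ℝ) else 0) with hM
  have hmem : ∀ k : Fin K, (k:ℕ)+1 ∈ Finset.Icc 1 K := by
    intro k; have := k.isLt; exact Finset.mem_Icc.mpr ⟨by omega, by omega⟩
  have rowsum : ∀ k : Fin K, ∑ ψ : Fin K, M k ψ = (d:ℝ) := by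
    intro k
    have h1 : ∑ ψ : Fin K, M k ψ
        = (((Finset.univ : Finset (Fin K)).filter
            (fun (ψ : Fin K) => (ψ:ℕ)+1 ∈ Ψ ((k:ℕ)+1))).card : ℝ) := by
      simp [hM, Finset.sum_boole]
    rw [h1, card_filter_fin K _ (hsub _ (hmem k)), hcard _ (hmem k)]
  have hMMT : ∀ k k' : Fin K, (M * Mᵀ) k k' = if k = k' then (d:ℝ) else (c:ℝ) := by
    intro k k'
    have h1 : (M * Mᵀ) k k'
        = ∑ ψ : Fin K, (if (ψ:ℕ)+1 ∈ Ψ ((k:ℕ)+1) ∩ Ψ ((k':ℕ)+1) then (1:ℝ) else 0) := by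
      simp only [Matrix.mul_apply, Matrix.transpose_apply, hM, Matrix.of_apply]
      refine Finset.sum_congr rfl fun ψ _ => ?_
      by_cases h1 : (ψ:ℕ)+1 ∈ Ψ ((k:ℕ)+1) <;> by_cases h2 : (ψ:ℕ)+1 ∈ Ψ ((k':ℕ)+1) <;>
        simp [h1, h2, Finset.mem_inter]
    rw [h1, Finset.sum_boole,
      card_filter_fin K _ ((Finset.inter_subset_left).trans (hsub _ (hmem k)))]
    by_cases hkk : k = k'
    · subst hkk; simp [Finset.inter_self, hcard _ (hmem k)]
    · rw [if_neg hkk, hinter _ (hmem k) _ (hmem k') (fun h => hkk (Fin.ext (by omega)))]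
  have hquad : ∀ v : Fin K → ℝ, v ⬝ᵥ (M * Mᵀ).mulVec v
      = ((d:ℝ)-c) * (∑ ψ, v ψ * v ψ) + c * (∑ ψ, v ψ)^2 := by
    intro v
    have inner : ∀ k, (M * Mᵀ).mulVec v k = ((d:ℝ)-c) * v k + c * ∑ ψ, v ψ := by
      intro k
      simp only [Matrix.mulVec, dotProduct]
      calc ∑ k', (M * Mᵀ) k k' * v k'
          = ∑ k', ((c:ℝ) * v k' + (if k = k' then ((d:ℝ)-c) * v k' else 0)) := by
            refine Finset.sum_congr rfl fun k' _ => ?_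
            rw [hMMT k k']
            by_cases h : k = k' <;> simp [h] <;> ring
        _ = ((d:ℝ)-c) * v k + c * ∑ ψ, v ψ := by
            rw [Finset.sum_add_distrib, ← Finset.mul_sum, Finset.sum_ite_eq]
            simp only [Finset.mem_univ, if_true]
            ring
    simp only [dotProduct, inner]
    have e : ∀ x : Fin K, v x * (((d:ℝ)-c) * v x + c * ∑ ψ, v ψ)
        = ((d:ℝ)-c) * (v x * v x) + ((c:ℝ) * ∑ ψ, v ψ) * v x := fun x => by ring
    simp_rw [e]
    rw [Finset.sum_add_distrib, ← Finset.mul_sum, ← Finset.mul_sum]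
    ring
  have hdet : M.det ≠ 0 := by
    intro h0
    have h0T : Mᵀ.det = 0 := by rw [Matrix.det_transpose]; exact h0
    obtain ⟨v, hv, hMv⟩ := (Matrix.exists_mulVec_eq_zero_iff).mpr h0T
    have h1 : v ⬝ᵥ (M * Mᵀ).mulVec v = 0 := by
      rw [← Matrix.mulVec_mulVec, hMv, Matrix.mulVec_zero, dotProduct_zero]
    rw [hquad v] at h1
    have hs2 : 0 < ∑ ψ, v ψ * v ψ := by
      obtain ⟨ψ0, hψ0⟩ := Function.ne_iff.mp hv
      exact Finset.sum_pos' (fun ψ _ => mul_self_nonneg _)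
        ⟨ψ0, Finset.mem_univ _, mul_self_pos.mpr hψ0⟩
    have hc1 : (1:ℝ) ≤ (d:ℝ) - c := by
      have : (c:ℝ) + 1 ≤ d := by exact_mod_cast hcd
      linarith
    nlinarith [sq_nonneg (∑ ψ, v ψ), hs2, hc1, (by exact_mod_cast hc : (1:ℝ) ≤ (c:ℝ))]
  have hinj : Function.Injective M.mulVec :=
    Matrix.mulVec_injective_iff_isUnit.mpr
      ((Matrix.isUnit_iff_isUnit_det M).mpr (isUnit_iff_ne_zero.mpr hdet))
  set a : ℝ := ((d:ℝ) - c + c*K)/d with ha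
  have hw : Mᵀ.mulVec (fun _ => (1:ℝ)) = fun _ => a := by
    apply hinj
    rw [Matrix.mulVec_mulVec]
    funext k
    have hL : (M * Mᵀ).mulVec (fun _ => (1:ℝ)) k = (d:ℝ) - c + c*K := by
      simp only [Matrix.mulVec, dotProduct, mul_one]
      calc ∑ k', (M * Mᵀ) k k'
          = ∑ k' : Fin K, ((c:ℝ) + (if k = k' then ((d:ℝ)-c) else 0)) := by
            refine Finset.sum_congr rfl fun k' _ => ?_
            rw [hMMT k k']
            by_cases h : k = k' <;> simp [h]
        _ = (d:ℝ) - c + c*K := by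
            rw [Finset.sum_add_distrib, Finset.sum_ite_eq]
            simp only [Finset.mem_univ, if_true, Finset.sum_const, Finset.card_univ,
              Fintype.card_fin, nsmul_eq_mul]
            ring
    have hR : M.mulVec (fun _ => a) k = a * d := by
      simp only [Matrix.mulVec, dotProduct]
      rw [← Finset.sum_mul, rowsum k]; ring
    rw [hL, hR, ha]
    field_simp
  have hsum : ∑ ψ : Fin K, (Mᵀ.mulVec (fun _ => (1:ℝ))) ψ = (K:ℝ) * d := by
    simp only [Matrix.mulVec, dotProduct, Matrix.transpose_apply, mul_one]
    rw [Finset.sum_comm]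
    rw [Finset.sum_congr rfl (fun k _ => rowsum k), Finset.sum_const, Finset.card_univ,
      Fintype.card_fin, nsmul_eq_mul]
  rw [hw, Finset.sum_const, Finset.card_univ, Fintype.card_fin, nsmul_eq_mul] at hsum
  have haK : a = (d:ℝ) := mul_left_cancel₀ (ne_of_gt hK0) hsum
  rw [ha] at haK
  have hdne : (d:ℝ) ≠ 0 := ne_of_gt hd0
  field_simp at haK
  linarith [haK]

noncomputable def aqf (ρ : ℝ) : ℕ → ℝ
  | 0 => 0
  | t+1 => 1 + ρ * aqf ρ t

noncomputable def bqf (ρ γ : ℝ) : ℕ → ℝ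
  | 0 => 0
  | t+1 => γ * aqf ρ t + bqf ρ γ t

lemma aqf_nonneg (ρ : ℝ) (h0 : 0 ≤ ρ) : ∀ t, 0 ≤ aqf ρ t := by
  intro t; induction t with
  | zero => simp [aqf]
  | succ t ih => simp only [aqf]; positivity

lemma aqf_le (ρ : ℝ) (h0 : 0 ≤ ρ) (h1 : ρ < 1) : ∀ t, aqf ρ t ≤ (1-ρ)⁻¹ := by
  have hpos : (0:ℝ) < 1 - ρ := by linarith
  intro t; induction t with
  | zero =>
    simp only [aqf]
    exact inv_nonneg.mpr (by linarith)
  | succ t ih =>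
    simp only [aqf]
    have h2 : 1 + ρ * (1-ρ)⁻¹ = (1-ρ)⁻¹ := by field_simp; ring
    calc 1 + ρ * aqf ρ t ≤ 1 + ρ * (1-ρ)⁻¹ := by nlinarith
      _ = (1-ρ)⁻¹ := h2

lemma bqf_nonneg (ρ γ : ℝ) (h0 : 0 ≤ ρ) (hγ : 0 ≤ γ) : ∀ t, 0 ≤ bqf ρ γ t := by
  intro t; induction t with
  | zero => simp [bqf]
  | succ t ih =>
    simp only [bqf]
    have := aqf_nonneg ρ h0 t
    positivity

lemma bqf_le (ρ γ : ℝ) (h0 : 0 ≤ ρ) (h1 : ρ < 1) (hγ : 0 ≤ γ) (Kr : ℝ) (hKr : 0 < Kr)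
    (hγC : γ * (1-ρ)⁻¹ = 1/Kr) : ∀ t, bqf ρ γ (t+1) ≤ t/Kr := by
  intro t; induction t with
  | zero => simp [bqf, aqf]
  | succ t ih =>
    show γ * aqf ρ (t+1) + bqf ρ γ (t+1) ≤ _
    have h2 : γ * aqf ρ (t+1) ≤ 1/Kr := by
      rw [← hγC]
      exact mul_le_mul_of_nonneg_left (aqf_le ρ h0 h1 (t+1)) hγ
    push_cast
    have : ((t:ℝ)+1)/Kr = t/Kr + 1/Kr := by ring
    rw [this]
    push_cast at ih
    linarith

/-- every position is observed by someone -/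
lemma cover_lemma (K : ℕ) (hK : 1 ≤ K) (Ψ : ℕ → Finset ℕ)
    (hsub : ∀ k ∈ Finset.Icc 1 K, Ψ k ⊆ Finset.Icc 1 K)
    (hconn : ∀ k₁ k₂ : ℕ, 1 ≤ k₁ → k₁ ≤ k₂ → k₂ ≤ K →
      ∃ t₁ t₂ : ℕ, t₁ < t₂ ∧ HasPath (genNet K Ψ) (t₂ * K + k₂) (t₁ * K + k₁)) :
    ∀ ψ, 1 ≤ ψ → ψ ≤ K → ∃ k, 1 ≤ k ∧ k ≤ K ∧ ψ ∈ Ψ k := by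
  intro ψ hψ1 hψK
  obtain ⟨t₁, t₂, h12, L, f, hf0, hfL, hstep⟩ := hconn ψ ψ hψ1 le_rfl hψK
  have hL : L ≠ 0 := by
    intro h
    rw [h, hf0] at hfL
    have h1 : t₂ * K = t₁ * K + (t₂ - t₁) * K := by
      rw [← Nat.add_mul]
      congr 1
      omega
    have h2 : 1 * K ≤ (t₂ - t₁) * K := Nat.mul_le_mul_right K (by omega)
    omega
  have hlast := hstep (L-1) (by omega)
  rw [show L - 1 + 1 = L from by omega, hfL] at hlast
  set j := f (L-1) with hj
  by_cases hjK : j ≤ K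
  · rw [genNet] at hlast; simp [hjK] at hlast
  · rw [genNet] at hlast
    rw [if_neg hjK, Finset.mem_image] at hlast
    obtain ⟨ψ', hψ'mem, hψ'eq⟩ := hlast
    have hpos : (j-1) % K + 1 ∈ Finset.Icc 1 K := by
      have := Nat.mod_lt (j-1) (show 0 < K by omega)
      exact Finset.mem_Icc.mpr ⟨by omega, by omega⟩
    have hψ'K := Finset.mem_Icc.mp (hsub _ hpos hψ'mem)
    -- hψ'eq : ((j-1)/K - 1) * K + ψ' = t₁ * K + ψ
    refine ⟨(j-1) % K + 1, (Finset.mem_Icc.mp hpos).1, (Finset.mem_Icc.mp hpos).2, ?_⟩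
    have hψψ' : ψ' = ψ := by
      set q := (j-1)/K - 1 with hq
      have e1 : (ψ' - 1 + q * K) % K = (ψ - 1 + t₁ * K) % K := by
        congr 1
        omega
      rw [Nat.add_mul_mod_self_right, Nat.add_mul_mod_self_right,
        Nat.mod_eq_of_lt (by omega), Nat.mod_eq_of_lt (by omega)] at e1
      omega
    rwa [hψψ'] at hψ'mem

-- structure lemmas
lemma genNet_low (K : ℕ) (Ψ : ℕ → Finset ℕ) (i : ℕ) (h : i ≤ K) : genNet K Ψ i = ∅ := by
  rw [genNet, if_pos h]

lemma genNet_eq (K : ℕ) (Ψ : ℕ → Finset ℕ) (t k : ℕ) (ht : 1 ≤ t) (hk1 : 1 ≤ k) (hkK : k ≤ K) :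
    genNet K Ψ (t*K+k) = (Ψ k).image (fun ψ => (t-1)*K + ψ) := by
  have hKt : K ≤ t*K := by
    calc K = 1*K := (one_mul K).symm
    _ ≤ t*K := Nat.mul_le_mul_right K ht
  have hiK : ¬ (t*K + k ≤ K) := by omega
  have e0 : t*K + k - 1 = t*K + (k-1) := Nat.add_sub_assoc hk1 _
  have e1 : (t*K + k - 1) % K + 1 = k := by
    rw [e0, mul_comm t K, Nat.mul_add_mod, Nat.mod_eq_of_lt (by omega)]
    omega
  have e2 : (t*K + k - 1) / K - 1 = t - 1 := by
    rw [e0, mul_comm t K, Nat.mul_add_div (by omega), Nat.div_eq_of_lt (by omega)]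
    omega
  rw [genNet, if_neg hiK, e1, e2]

lemma genNet_bounds (K : ℕ) (hK : 1 ≤ K) (Ψ : ℕ → Finset ℕ)
    (hsub : ∀ k ∈ Finset.Icc 1 K, Ψ k ⊆ Finset.Icc 1 K) (i : ℕ) :
    ∀ j ∈ genNet K Ψ i, 1 ≤ j ∧ j < i := by
  intro j hj
  rw [genNet] at hj
  by_cases hiK : i ≤ K
  · simp [hiK] at hj
  · rw [if_neg hiK, Finset.mem_image] at hj
    obtain ⟨ψ, hψ, rfl⟩ := hj
    have hpos : (i-1) % K + 1 ∈ Finset.Icc 1 K := by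
      have := Nat.mod_lt (i-1) (show 0 < K by omega)
      exact Finset.mem_Icc.mpr ⟨by omega, by omega⟩
    have hψK := Finset.mem_Icc.mp (hsub _ hpos hψ)
    constructor
    · omega
    · have hq : 1 ≤ (i-1)/K := (Nat.one_le_div_iff (by omega)).mpr (by omega)
      have h2 : ((i-1)/K - 1) * K + K = ((i-1)/K) * K := by
        have hq' : (i-1)/K - 1 + 1 = (i-1)/K := by omega
        calc ((i-1)/K - 1) * K + K = ((i-1)/K - 1 + 1) * K := by rw [add_mul, one_mul]
        _ = ((i-1)/K) * K := by rw [hq']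
      have h3 : ((i-1)/K) * K ≤ i - 1 := Nat.div_mul_le_self _ _
      omega

lemma wgt_sum_shrink (K : ℕ) (dr : ℝ) (Ψ : ℕ → Finset ℕ) (j n n' : ℕ)
    (hj : j < n) (hn : n ≤ n') :
    ∑ m ∈ Finset.range n', wgt K dr Ψ j m = ∑ m ∈ Finset.range n, wgt K dr Ψ j m := by
  refine (Finset.sum_subset (Finset.range_subset_range.mpr hn) ?_).symm
  intro m hm hnot
  rw [Finset.mem_range] at hm hnot
  exact wgt_zero K dr Ψ j m (by omega)

lemma wgt_mul_sum_shrink (K : ℕ) (dr : ℝ) (Ψ : ℕ → Finset ℕ) (j j' n n' : ℕ)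
    (hj : j < n) (hn : n ≤ n') :
    ∑ m ∈ Finset.range n', wgt K dr Ψ j m * wgt K dr Ψ j' m
      = ∑ m ∈ Finset.range n, wgt K dr Ψ j m * wgt K dr Ψ j' m := by
  refine (Finset.sum_subset (Finset.range_subset_range.mpr hn) ?_).symm
  intro m hm hnot
  rw [Finset.mem_range] at hm hnot
  rw [wgt_zero K dr Ψ j m (by omega), zero_mul]

lemma main_calc (K d c' : ℕ) (hK : 1 ≤ K) (hd : 1 ≤ d) (Ψ : ℕ → Finset ℕ)
    (hsub : ∀ k ∈ Finset.Icc 1 K, Ψ k ⊆ Finset.Icc 1 K)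
    (hcard : ∀ k ∈ Finset.Icc 1 K, (Ψ k).card = d)
    (hinter : ∀ k₁ ∈ Finset.Icc 1 K, ∀ k₂ ∈ Finset.Icc 1 K, k₁ ≠ k₂ →
      ((Ψ k₁) ∩ (Ψ k₂)).card = c') :
    ∀ t, 1 ≤ t → ∀ k k', 1 ≤ k → k ≤ K → 1 ≤ k' → k' ≤ K →
      (∑ m ∈ Finset.range (t*K+1), wgt K (d:ℝ)⁻¹ Ψ ((t-1)*K+k) m) = (t:ℝ) ∧
      (∑ m ∈ Finset.range (t*K+1),
          wgt K (d:ℝ)⁻¹ Ψ ((t-1)*K+k) m * wgt K (d:ℝ)⁻¹ Ψ ((t-1)*K+k') m)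
        = (if k = k' then aqf (((d:ℝ)-(c':ℝ))/(d:ℝ)^2) t else 0)
          + bqf (((d:ℝ)-(c':ℝ))/(d:ℝ)^2) ((c':ℝ)/(d:ℝ)^2) t := by
  set dr : ℝ := (d:ℝ)⁻¹ with hdr
  set ρ : ℝ := (((d:ℝ)-(c':ℝ))/(d:ℝ)^2) with hρ
  set γ : ℝ := ((c':ℝ)/(d:ℝ)^2) with hγ
  have hdne : (d:ℝ) ≠ 0 := by positivity
  intro t ht
  induction t, ht using Nat.le_induction with
  | base =>
    intro k k' hk1 hkK hk'1 hk'K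
    simp only [Nat.sub_self, Nat.zero_mul, Nat.zero_add, one_mul]
    have hw : ∀ k₀ m : ℕ, k₀ ≤ K → wgt K dr Ψ k₀ m = if m = k₀ then 1 else 0 := by
      intro k₀ m hk₀
      rw [wgt_apply, genNet_low K Ψ k₀ hk₀]
      simp
    constructor
    · rw [Finset.sum_congr rfl (fun m _ => hw k m hkK), Finset.sum_ite_eq']
      rw [if_pos (Finset.mem_range.mpr (by omega))]
      simp [aqf, bqf]
    · rw [Finset.sum_congr rfl (fun m _ => by rw [hw k m hkK, hw k' m hk'K])]
      have e : ∀ m : ℕ, (if m = k then (1:ℝ) else 0) * (if m = k' then 1 else 0)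
          = if m = k then (if m = k' then (1:ℝ) else 0) else 0 := by
        intro m; by_cases h : m = k <;> simp [h]
      rw [Finset.sum_congr rfl (fun m _ => e m), Finset.sum_ite_eq']
      rw [if_pos (Finset.mem_range.mpr (by omega))]
      simp [aqf, bqf]
  | succ t ht ih =>
    intro k k' hk1 hkK hk'1 hk'K
    simp only [Nat.add_sub_cancel]
    -- agent is t*K + k
    have hKt : K ≤ t*K := by
      calc K = 1*K := (one_mul K).symm
      _ ≤ t*K := Nat.mul_le_mul_right K ht
    have htK1 : (t-1)*K + K = t*K := by
      have ht' : t - 1 + 1 = t := by omega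
      calc (t-1)*K + K = (t-1+1)*K := by rw [add_mul, one_mul]
      _ = t*K := by rw [ht']
    have htK2 : t*K + K = (t+1)*K := by ring
    have hψle : ∀ k₀, 1 ≤ k₀ → k₀ ≤ K → ∀ ψ ∈ Ψ k₀, 1 ≤ ψ ∧ ψ ≤ K := by
      intro k₀ h1 h2 ψ hψ
      have := Finset.mem_Icc.mp (hsub k₀ (Finset.mem_Icc.mpr ⟨h1, h2⟩) hψ)
      exact this
    have hw : ∀ k₀ m : ℕ, 1 ≤ k₀ → k₀ ≤ K →
        wgt K dr Ψ (t*K+k₀) m = (if m = t*K+k₀ then 1 else 0)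
          + dr * ∑ ψ ∈ Ψ k₀, wgt K dr Ψ ((t-1)*K+ψ) m := by
      intro k₀ m h1 h2
      rw [wgt_apply, genNet_eq K Ψ t k₀ ht h1 h2, Finset.filter_true_of_mem, Finset.sum_image]
      · intro a _ b _ h; simp only at h; omega
      · intro j hj
        obtain ⟨ψ, hψ, rfl⟩ := Finset.mem_image.mp hj
        have h3 := (hψle k₀ h1 h2 ψ hψ).2
        have h4 : (t-1)*K + ψ ≤ (t-1)*K + K := by omega
        rw [htK1] at h4
        omega
    have hsupp : ∀ ψ, 1 ≤ ψ → ψ ≤ K → (t-1)*K + ψ < t*K + 1 := by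
      intro ψ h1 h2
      have h4 : (t-1)*K + ψ ≤ (t-1)*K + K := by omega
      rw [htK1] at h4
      omega
    have hrange : t*K + 1 ≤ (t+1)*K + 1 := by omega
    have hS1 : ∀ k₀, 1 ≤ k₀ → k₀ ≤ K →
        ∑ m ∈ Finset.range ((t+1)*K+1), wgt K dr Ψ (t*K+k₀) m = ((t:ℝ)+1) := by
      intro k₀ h1 h2
      rw [Finset.sum_congr rfl (fun m _ => hw k₀ m h1 h2), Finset.sum_add_distrib,
        ← Finset.mul_sum, Finset.sum_comm, Finset.sum_ite_eq']
      have hmem : t*K+k₀ ∈ Finset.range ((t+1)*K+1) := Finset.mem_range.mpr (by omega)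
      rw [if_pos hmem]
      have hin : ∀ ψ ∈ Ψ k₀, ∑ m ∈ Finset.range ((t+1)*K+1), wgt K dr Ψ ((t-1)*K+ψ) m
          = (t:ℝ) := by
        intro ψ hψ
        obtain ⟨hψ1, hψ2⟩ := hψle k₀ h1 h2 ψ hψ
        rw [wgt_sum_shrink K dr Ψ _ (t*K+1) _ (hsupp ψ hψ1 hψ2) hrange]
        exact (ih ψ ψ hψ1 hψ2 hψ1 hψ2).1
      rw [Finset.sum_congr rfl hin, Finset.sum_const, hcard k₀ (Finset.mem_Icc.mpr ⟨h1, h2⟩),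
        nsmul_eq_mul]
      rw [hdr]
      field_simp
      ring
    refine ⟨(hS1 k hk1 hkK).trans (by push_cast; ring), ?_⟩
    -- the inner product computation
    rw [Finset.sum_congr rfl (fun m _ => by rw [hw k m hk1 hkK, hw k' m hk'1 hk'K])]
    have expand : ∀ m : ℕ,
        ((if m = t*K+k then (1:ℝ) else 0) + dr * ∑ ψ ∈ Ψ k, wgt K dr Ψ ((t-1)*K+ψ) m)
        * ((if m = t*K+k' then (1:ℝ) else 0) + dr * ∑ ψ ∈ Ψ k', wgt K dr Ψ ((t-1)*K+ψ) m)
        = (if m = t*K+k then (1:ℝ) else 0) * (if m = t*K+k' then (1:ℝ) else 0)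
          + (if m = t*K+k then (1:ℝ) else 0) * (dr * ∑ ψ ∈ Ψ k', wgt K dr Ψ ((t-1)*K+ψ) m)
          + (if m = t*K+k' then (1:ℝ) else 0) * (dr * ∑ ψ ∈ Ψ k, wgt K dr Ψ ((t-1)*K+ψ) m)
          + (dr * ∑ ψ ∈ Ψ k, wgt K dr Ψ ((t-1)*K+ψ) m)
            * (dr * ∑ ψ ∈ Ψ k', wgt K dr Ψ ((t-1)*K+ψ) m) := by
      intro m
      ring
    rw [Finset.sum_congr rfl (fun m _ => expand m)]
    rw [Finset.sum_add_distrib, Finset.sum_add_distrib, Finset.sum_add_distrib]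
    have hmemk : t*K+k ∈ Finset.range ((t+1)*K+1) := Finset.mem_range.mpr (by omega)
    have hmemk' : t*K+k' ∈ Finset.range ((t+1)*K+1) := Finset.mem_range.mpr (by omega)
    have T1 : ∑ m ∈ Finset.range ((t+1)*K+1),
        (if m = t*K+k then (1:ℝ) else 0) * (if m = t*K+k' then (1:ℝ) else 0)
        = if k = k' then (1:ℝ) else 0 := by
      have e : ∀ m : ℕ, (if m = t*K+k then (1:ℝ) else 0) * (if m = t*K+k' then 1 else 0)
          = if m = t*K+k then (if m = t*K+k' then (1:ℝ) else 0) else 0 := by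
        intro m; by_cases h : m = t*K+k <;> simp [h]
      rw [Finset.sum_congr rfl (fun m _ => e m), Finset.sum_ite_eq', if_pos hmemk]
      by_cases h : k = k'
      · simp [h]
      · rw [if_neg (by omega), if_neg h]
    have hvanish : ∀ k₀, 1 ≤ k₀ → k₀ ≤ K → ∀ mm, t*K < mm →
        dr * ∑ ψ ∈ Ψ k₀, wgt K dr Ψ ((t-1)*K+ψ) mm = 0 := by
      intro k₀ h1 h2 mm hmm
      rw [Finset.sum_eq_zero, mul_zero]
      intro ψ hψ
      obtain ⟨hψ1, hψ2⟩ := hψle k₀ h1 h2 ψ hψ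
      refine wgt_zero K dr Ψ _ _ ?_
      have := hsupp ψ hψ1 hψ2
      omega
    have T2 : ∑ m ∈ Finset.range ((t+1)*K+1),
        (if m = t*K+k then (1:ℝ) else 0) * (dr * ∑ ψ ∈ Ψ k', wgt K dr Ψ ((t-1)*K+ψ) m) = 0 := by
      have e2 : ∀ m : ℕ, (if m = t*K+k then (1:ℝ) else 0)
            * (dr * ∑ ψ ∈ Ψ k', wgt K dr Ψ ((t-1)*K+ψ) m)
          = if m = t*K+k then (dr * ∑ ψ ∈ Ψ k', wgt K dr Ψ ((t-1)*K+ψ) m) else 0 := by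
        intro m; by_cases h : m = t*K+k <;> simp [h]
      rw [Finset.sum_congr rfl (fun m _ => e2 m), Finset.sum_ite_eq', if_pos hmemk]
      exact hvanish k' hk'1 hk'K _ (by omega)
    have T3 : ∑ m ∈ Finset.range ((t+1)*K+1),
        (if m = t*K+k' then (1:ℝ) else 0) * (dr * ∑ ψ ∈ Ψ k, wgt K dr Ψ ((t-1)*K+ψ) m) = 0 := by
      have e3 : ∀ m : ℕ, (if m = t*K+k' then (1:ℝ) else 0)
            * (dr * ∑ ψ ∈ Ψ k, wgt K dr Ψ ((t-1)*K+ψ) m)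
          = if m = t*K+k' then (dr * ∑ ψ ∈ Ψ k, wgt K dr Ψ ((t-1)*K+ψ) m) else 0 := by
        intro m; by_cases h : m = t*K+k' <;> simp [h]
      rw [Finset.sum_congr rfl (fun m _ => e3 m), Finset.sum_ite_eq', if_pos hmemk']
      exact hvanish k hk1 hkK _ (by omega)
    have T4 : ∑ m ∈ Finset.range ((t+1)*K+1),
        (dr * ∑ ψ ∈ Ψ k, wgt K dr Ψ ((t-1)*K+ψ) m)
          * (dr * ∑ ψ ∈ Ψ k', wgt K dr Ψ ((t-1)*K+ψ) m)
        = dr^2 * (((if k = k' then (d:ℝ) else (c':ℝ))) * aqf ρ t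
            + (d:ℝ)*(d:ℝ) * bqf ρ γ t) := by
      have e : ∀ m : ℕ, (dr * ∑ ψ ∈ Ψ k, wgt K dr Ψ ((t-1)*K+ψ) m)
            * (dr * ∑ ψ ∈ Ψ k', wgt K dr Ψ ((t-1)*K+ψ) m)
          = dr^2 * ∑ ψ ∈ Ψ k, ∑ ψ' ∈ Ψ k',
              wgt K dr Ψ ((t-1)*K+ψ) m * wgt K dr Ψ ((t-1)*K+ψ') m := by
        intro m
        have hsms := Finset.sum_mul_sum (Ψ k) (Ψ k')
          (fun ψ => wgt K dr Ψ ((t-1)*K+ψ) m) (fun ψ' => wgt K dr Ψ ((t-1)*K+ψ') m)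
        calc (dr * ∑ ψ ∈ Ψ k, wgt K dr Ψ ((t-1)*K+ψ) m)
              * (dr * ∑ ψ ∈ Ψ k', wgt K dr Ψ ((t-1)*K+ψ) m)
            = dr^2 * ((∑ ψ ∈ Ψ k, wgt K dr Ψ ((t-1)*K+ψ) m)
                * (∑ ψ' ∈ Ψ k', wgt K dr Ψ ((t-1)*K+ψ') m)) := by ring
          _ = dr^2 * ∑ ψ ∈ Ψ k, ∑ ψ' ∈ Ψ k',
                wgt K dr Ψ ((t-1)*K+ψ) m * wgt K dr Ψ ((t-1)*K+ψ') m := by rw [hsms]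
      rw [Finset.sum_congr rfl (fun m _ => e m), ← Finset.mul_sum]
      congr 1
      rw [Finset.sum_comm]
      have inner1 : ∀ ψ ∈ Ψ k, ∑ m ∈ Finset.range ((t+1)*K+1), ∑ ψ' ∈ Ψ k',
            wgt K dr Ψ ((t-1)*K+ψ) m * wgt K dr Ψ ((t-1)*K+ψ') m
          = ∑ ψ' ∈ Ψ k', ((if ψ = ψ' then aqf ρ t else 0) + bqf ρ γ t) := by
        intro ψ hψ
        obtain ⟨hψ1, hψ2⟩ := hψle k hk1 hkK ψ hψ
        rw [Finset.sum_comm]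
        refine Finset.sum_congr rfl fun ψ' hψ' => ?_
        obtain ⟨hψ'1, hψ'2⟩ := hψle k' hk'1 hk'K ψ' hψ'
        rw [wgt_mul_sum_shrink K dr Ψ _ _ (t*K+1) _ (hsupp ψ hψ1 hψ2) hrange]
        exact (ih ψ ψ' hψ1 hψ2 hψ'1 hψ'2).2
      rw [Finset.sum_congr rfl inner1]
      have step2 : ∑ ψ ∈ Ψ k, ∑ ψ' ∈ Ψ k', ((if ψ = ψ' then aqf ρ t else 0) + bqf ρ γ t)
          = (((Ψ k) ∩ (Ψ k')).card : ℝ) * aqf ρ t + ((d:ℝ)*(d:ℝ)) * bqf ρ γ t := by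
        simp only [Finset.sum_add_distrib]
        congr 1
        · rw [Finset.sum_congr rfl (fun ψ _ => Finset.sum_ite_eq (Ψ k') ψ (fun _ => aqf ρ t))]
          rw [Finset.sum_ite_mem, Finset.sum_const, nsmul_eq_mul]
        · rw [Finset.sum_const, Finset.sum_const, nsmul_eq_mul, nsmul_eq_mul,
            hcard k (Finset.mem_Icc.mpr ⟨hk1, hkK⟩), hcard k' (Finset.mem_Icc.mpr ⟨hk'1, hk'K⟩)]
          ring
      rw [step2]
      congr 2
      by_cases h : k = k'
      · rw [if_pos h, h, Finset.inter_self, hcard k' (Finset.mem_Icc.mpr ⟨hk'1, hk'K⟩)]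
      · rw [if_neg h, hinter k (Finset.mem_Icc.mpr ⟨hk1, hkK⟩) k' (Finset.mem_Icc.mpr ⟨hk'1, hk'K⟩) h]
    rw [T1, T2, T3, T4]
    -- final algebra
    by_cases h : k = k'
    · rw [if_pos h, if_pos h, if_pos h]
      show (1:ℝ) + 0 + 0 + dr^2 * ((d:ℝ) * aqf ρ t + (d:ℝ)*(d:ℝ) * bqf ρ γ t)
        = aqf ρ (t+1) + bqf ρ γ (t+1)
      simp only [aqf, bqf, hρ, hγ, hdr]
      field_simp
      ring
    · rw [if_neg h, if_neg h, if_neg h]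
      show (0:ℝ) + 0 + 0 + dr^2 * ((c':ℝ) * aqf ρ t + (d:ℝ)*(d:ℝ) * bqf ρ γ t)
        = 0 + bqf ρ γ (t+1)
      simp only [aqf, bqf, hρ, hγ, hdr]
      field_simp
      ring

lemma identity_all (K d c : ℕ) (hK : 1 ≤ K) (hc : 1 ≤ c) (hd : 1 ≤ d)
    (Ψ : ℕ → Finset ℕ)
    (hsub : ∀ k ∈ Finset.Icc 1 K, Ψ k ⊆ Finset.Icc 1 K)
    (hcard : ∀ k ∈ Finset.Icc 1 K, (Ψ k).card = d)
    (hinter : ∀ k₁ ∈ Finset.Icc 1 K, ∀ k₂ ∈ Finset.Icc 1 K, k₁ ≠ k₂ →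
      ((Ψ k₁) ∩ (Ψ k₂)).card = c)
    (hcover : ∀ ψ, 1 ≤ ψ → ψ ≤ K → ∃ k, 1 ≤ k ∧ k ≤ K ∧ ψ ∈ Ψ k) :
    ((min c d : ℕ) : ℝ) * ((K:ℝ) - 1) = (d:ℝ) * ((d:ℝ) - 1)
    ∧ (∀ k₁ ∈ Finset.Icc 1 K, ∀ k₂ ∈ Finset.Icc 1 K, k₁ ≠ k₂ →
      ((Ψ k₁) ∩ (Ψ k₂)).card = min c d) := by
  have h1K : (1:ℕ) ∈ Finset.Icc 1 K := Finset.mem_Icc.mpr ⟨le_refl 1, hK⟩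
  by_cases hK1 : K = 1
  · subst hK1
    have hd1 : d = 1 := by
      have h2 := hcard 1 h1K
      have h3 : (Ψ 1).card ≤ (Finset.Icc 1 1).card := Finset.card_le_card (hsub 1 h1K)
      simp at h3
      omega
    constructor
    · subst hd1; push_cast; ring
    · intro k₁ hk₁ k₂ hk₂ hne
      rw [Finset.mem_Icc] at hk₁ hk₂
      omega
  · have hK2 : 2 ≤ K := by omega
    have h2K : (2:ℕ) ∈ Finset.Icc 1 K := Finset.mem_Icc.mpr ⟨by omega, by omega⟩
    have hcd : c ≤ d := by
      have := hinter 1 h1K 2 h2K (by omega)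
      calc c = ((Ψ 1) ∩ (Ψ 2)).card := this.symm
        _ ≤ (Ψ 1).card := Finset.card_le_card Finset.inter_subset_left
        _ = d := hcard 1 h1K
    have hmin : min c d = c := min_eq_left hcd
    rw [hmin]
    refine ⟨?_, fun k₁ hk₁ k₂ hk₂ hne => hinter k₁ hk₁ k₂ hk₂ hne⟩
    rcases Nat.lt_or_ge c d with hlt | hge
    · exact design_identity_matrix K d c hK hc hlt Ψ hsub hcard hinter
    · -- c = d : all observation sets equal, and cover forces Ψ k = Icc 1 K, d = K
      have hcd' : c = d := le_antisymm hcd hge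
      have hall : ∀ k₁ ∈ Finset.Icc 1 K, ∀ k₂ ∈ Finset.Icc 1 K, Ψ k₁ = Ψ k₂ := by
        intro k₁ hk₁ k₂ hk₂
        by_cases hne : k₁ = k₂
        · rw [hne]
        · have hi := hinter k₁ hk₁ k₂ hk₂ hne
          have hsub1 : Ψ k₁ ∩ Ψ k₂ = Ψ k₁ :=
            Finset.eq_of_subset_of_card_le Finset.inter_subset_left
              (by rw [hi, hcard k₁ hk₁, hcd'])
          have hsub2 : Ψ k₁ ∩ Ψ k₂ = Ψ k₂ :=
            Finset.eq_of_subset_of_card_le Finset.inter_subset_right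
              (by rw [hi, hcard k₂ hk₂, hcd'])
          rw [← hsub1, hsub2]
      have hfull : Finset.Icc 1 K ⊆ Ψ 1 := by
        intro ψ hψ
        rw [Finset.mem_Icc] at hψ
        obtain ⟨k, hk1, hkK, hψk⟩ := hcover ψ hψ.1 hψ.2
        rw [hall 1 h1K k (Finset.mem_Icc.mpr ⟨hk1, hkK⟩)]
        exact hψk
      have hdK : d = K := by
        have h5 : (Finset.Icc 1 K).card ≤ (Ψ 1).card := Finset.card_le_card hfull
        have h6 : (Ψ 1).card ≤ (Finset.Icc 1 K).card := Finset.card_le_card (hsub 1 h1K)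
        have h7 := hcard 1 h1K
        simp [Nat.card_Icc] at h5 h6
        omega
      rw [hcd', hdK]

/-- Suppose the observation sets of a generations network are
strongly connected and symmetric with parameters `(d, c)`, `c ≥ 1`. Then there is a
log-linear (non-equilibrium) strategy profile, i.e. coefficients `b_{i,0}` and
`(b_{i,j})_{j∈N(i)}` defining weight vectors `W′_i = b_{i,0}·e_i + Σ_{j∈N(i)} b_{i,j}·W′_j`,
whose rows all satisfy the signal-counting identity, and such that for every
`K₀ < K` there is a `T` with: for all `t ≥ T` and `1 ≤ k ≤ K`, agent `(t−1)K+k`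
aggregates more than `(t−1)K₀` signals. -/
theorem planner_log_linear_profile (K d c : ℕ) (hK : 1 ≤ K) (hc : 1 ≤ c)
    (Ψ : ℕ → Finset ℕ)
    (hsub : ∀ k ∈ Finset.Icc 1 K, Ψ k ⊆ Finset.Icc 1 K)
    (hcard : ∀ k ∈ Finset.Icc 1 K, (Ψ k).card = d)
    (hinter : ∀ k₁ ∈ Finset.Icc 1 K, ∀ k₂ ∈ Finset.Icc 1 K, k₁ ≠ k₂ →
      ((Ψ k₁) ∩ (Ψ k₂)).card = c)
    (hconn : ∀ k₁ k₂ : ℕ, 1 ≤ k₁ → k₁ ≤ k₂ → k₂ ≤ K →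
      ∃ t₁ t₂ : ℕ, t₁ < t₂ ∧ HasPath (genNet K Ψ) (t₂ * K + k₂) (t₁ * K + k₁)) :
    ∃ (W' : ℕ → ℕ → ℝ) (b0 : ℕ → ℝ) (b : ℕ → ℕ → ℝ),
      (∀ i m : ℕ, W' i m
          = b0 i * (if m = i then 1 else 0)
            + ∑ j ∈ genNet K Ψ i, b i j * W' j m) ∧
      (∀ i : ℕ, 1 ≤ i →
        (∑ j ∈ Finset.range (i + 1), W' i j)
          = ∑ j ∈ Finset.range (i + 1), (W' i j) ^ 2) ∧
      (∀ K₀ : ℝ, 0 < K₀ → K₀ < K →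
        ∃ T : ℕ, ∀ t : ℕ, T ≤ t → ∀ k : ℕ, 1 ≤ k → k ≤ K →
          ((t : ℝ) - 1) * K₀
            < ∑ j ∈ Finset.range ((t - 1) * K + k + 1), W' ((t - 1) * K + k) j) := by
  have hcover := cover_lemma K hK Ψ hsub hconn
  have hd1 : 1 ≤ d := by
    obtain ⟨k, hk1, hkK, h1⟩ := hcover 1 le_rfl hK
    have h2 := hcard k (Finset.mem_Icc.mpr ⟨hk1, hkK⟩)
    have h3 : 0 < (Ψ k).card := Finset.card_pos.mpr ⟨1, h1⟩
    omega
  obtain ⟨hid, hinter'⟩ := identity_all K d c hK hc hd1 Ψ hsub hcard hinter hcover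
  set c' : ℕ := min c d with hc'def
  have hc'1 : 1 ≤ c' := le_min hc hd1
  have hc'd : c' ≤ d := min_le_right c d
  have hdR : (1:ℝ) ≤ (d:ℝ) := by exact_mod_cast hd1
  have hd0R : (0:ℝ) < (d:ℝ) := by linarith
  have hdne : (d:ℝ) ≠ 0 := ne_of_gt hd0R
  have hc'R : (1:ℝ) ≤ (c':ℝ) := by exact_mod_cast hc'1
  have hc'dR : (c':ℝ) ≤ (d:ℝ) := by exact_mod_cast hc'd
  have hKR : (0:ℝ) < (K:ℝ) := by exact_mod_cast hK
  set dr : ℝ := (d:ℝ)⁻¹ with hdrdef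
  set ρ : ℝ := ((d:ℝ)-(c':ℝ))/(d:ℝ)^2 with hρdef
  set γ : ℝ := (c':ℝ)/(d:ℝ)^2 with hγdef
  have hρ0 : 0 ≤ ρ := div_nonneg (by linarith) (by positivity)
  have hρ1 : ρ < 1 := by
    rw [hρdef, div_lt_one (by positivity)]
    nlinarith
  have hγ0 : 0 ≤ γ := div_nonneg (by linarith) (by positivity)
  have hγC : γ * (1-ρ)⁻¹ = 1/(K:ℝ) := by
    have h1ρ : 1 - ρ = ((d:ℝ)^2 - d + c')/(d:ℝ)^2 := by
      rw [hρdef]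
      field_simp
      ring
    have hden : (d:ℝ)^2 - d + c' = c' * K := by
      have hid' : (c':ℝ) * ((K:ℝ) - 1) = (d:ℝ) * ((d:ℝ) - 1) := by
        rw [hc'def]; exact_mod_cast hid
      linear_combination -hid'
    rw [h1ρ, hden]
    rw [hγdef, inv_div]
    field_simp
  have hdr0 : 0 ≤ dr := by rw [hdrdef]; positivity
  set S1 : ℕ → ℝ := fun i => ∑ m ∈ Finset.range (i+1), wgt K dr Ψ i m with hS1def
  set S2 : ℕ → ℝ := fun i => ∑ m ∈ Finset.range (i+1), (wgt K dr Ψ i m)^2 with hS2def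
  have hS1u : ∀ i, S1 i = ∑ m ∈ Finset.range (i+1), wgt K dr Ψ i m := fun i => by
    simp only [hS1def]
  have hS2u : ∀ i, S2 i = ∑ m ∈ Finset.range (i+1), (wgt K dr Ψ i m)^2 := fun i => by
    simp only [hS2def]
  have hS1pos : ∀ i, 0 < S1 i := by
    intro i
    have h1 : (1:ℝ) ≤ S1 i := by
      rw [hS1u]
      calc (1:ℝ) = wgt K dr Ψ i i := (wgt_self K dr Ψ i).symm
        _ ≤ ∑ m ∈ Finset.range (i+1), wgt K dr Ψ i m :=
          Finset.single_le_sum (fun m _ => wgt_nonneg K dr hdr0 Ψ i m)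
            (Finset.self_mem_range_succ i)
    linarith
  have hS2pos : ∀ i, 0 < S2 i := by
    intro i
    have h1 : (1:ℝ) ≤ S2 i := by
      rw [hS2u]
      calc (1:ℝ) = (wgt K dr Ψ i i)^2 := by rw [wgt_self K dr Ψ i]; norm_num
        _ ≤ ∑ m ∈ Finset.range (i+1), (wgt K dr Ψ i m)^2 :=
          Finset.single_le_sum (f := fun m => (wgt K dr Ψ i m)^2)
            (fun m _ => sq_nonneg _) (Finset.self_mem_range_succ i)
    linarith
  set α : ℕ → ℝ := fun i => S1 i / S2 i with hαdef
  have hαu : ∀ i, α i = S1 i / S2 i := fun i => by simp only [hαdef]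
  have hαpos : ∀ i, 0 < α i := fun i => by
    rw [hαu]; exact div_pos (hS1pos i) (hS2pos i)
  refine ⟨fun i m => α i * wgt K dr Ψ i m, α, fun i j => α i * dr / α j, ?_, ?_, ?_⟩
  · -- recursion
    intro i m
    dsimp only
    have hfe : (genNet K Ψ i).filter (fun j => j < i) = genNet K Ψ i :=
      Finset.filter_true_of_mem (fun j hj => (genNet_bounds K hK Ψ hsub i j hj).2)
    have hterm : ∀ j ∈ genNet K Ψ i,
        α i * dr / α j * (α j * wgt K dr Ψ j m) = α i * (dr * wgt K dr Ψ j m) := by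
      intro j _
      have h := (hαpos j).ne'
      field_simp
    rw [Finset.sum_congr rfl hterm, ← Finset.mul_sum, ← Finset.mul_sum]
    have hwi : wgt K dr Ψ i m
        = (if m = i then 1 else 0) + dr * ∑ j ∈ genNet K Ψ i, wgt K dr Ψ j m := by
      rw [wgt_apply K dr Ψ i m, hfe]
    rw [hwi]
    ring
  · -- signal-counting identity
    intro i _
    dsimp only
    have e1 : ∑ j ∈ Finset.range (i+1), α i * wgt K dr Ψ i j = α i * S1 i := by
      rw [← Finset.mul_sum, hS1u]
    have e2 : ∑ j ∈ Finset.range (i+1), (α i * wgt K dr Ψ i j)^2 = (α i)^2 * S2 i := by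
      rw [hS2u]
      rw [Finset.sum_congr rfl (fun j _ => mul_pow (α i) (wgt K dr Ψ i j) 2)]
      rw [← Finset.mul_sum]
    rw [e1, e2, hαu]
    have h2 := (hS2pos i).ne'
    field_simp
  · -- growth
    intro K₀ hK₀0 hK₀K
    set C : ℝ := (1-ρ)⁻¹ with hCdef
    have hC0 : 0 < C := by rw [hCdef]; exact inv_pos.mpr (by linarith)
    have hKK₀ : 0 < (K:ℝ) - K₀ := by linarith
    refine ⟨Nat.ceil (K₀ * C * K / ((K:ℝ) - K₀)) + 2, ?_⟩
    intro t hT k hk1 hkK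
    dsimp only
    have ht1 : 1 ≤ t := by omega
    have ht2 : 2 ≤ t := by omega
    obtain ⟨hS1v, hS2v⟩ :=
      main_calc K d c' hK hd1 Ψ hsub hcard
        (by rw [hc'def]; exact hinter') t ht1 k k hk1 hkK hk1 hkK
    rw [if_pos rfl] at hS2v
    have hiK : (t-1)*K + k < t*K + 1 := by
      have htK1 : (t-1)*K + K = t*K := by
        have ht' : t - 1 + 1 = t := by omega
        calc (t-1)*K + K = (t-1+1)*K := by rw [add_mul, one_mul]
        _ = t*K := by rw [ht']
      omega
    have hS1i : S1 ((t-1)*K+k) = (t:ℝ) := by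
      rw [hS1u]
      have hsh := wgt_sum_shrink K dr Ψ ((t-1)*K+k) ((t-1)*K+k+1) (t*K+1) (by omega) (by omega)
      rw [← hsh]
      rw [hdrdef]
      exact hS1v
    have hS2i : S2 ((t-1)*K+k) = aqf ρ t + bqf ρ γ t := by
      rw [hS2u]
      have hsh := wgt_mul_sum_shrink K dr Ψ ((t-1)*K+k) ((t-1)*K+k)
        ((t-1)*K+k+1) (t*K+1) (by omega) (by omega)
      have e3 : ∑ m ∈ Finset.range ((t-1)*K+k+1), (wgt K dr Ψ ((t-1)*K+k) m)^2
          = ∑ m ∈ Finset.range ((t-1)*K+k+1),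
              wgt K dr Ψ ((t-1)*K+k) m * wgt K dr Ψ ((t-1)*K+k) m := by
        refine Finset.sum_congr rfl fun m _ => ?_
        rw [sq]
      rw [e3, ← hsh]
      rw [hdrdef]
      rw [hρdef, hγdef]
      exact hS2v
    have egoal : ∑ j ∈ Finset.range ((t-1)*K+k+1), α ((t-1)*K+k) * wgt K dr Ψ ((t-1)*K+k) j
        = α ((t-1)*K+k) * S1 ((t-1)*K+k) := by
      rw [← Finset.mul_sum, hS1u]
    rw [egoal, hαu, hS1i, hS2i]
    -- now: ((t:ℝ)-1)*K₀ < t / (aqf+bqf) * t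
    have hS2pos' : 0 < aqf ρ t + bqf ρ γ t := by
      have := hS2pos ((t-1)*K+k)
      rw [hS2i] at this
      exact this
    rw [div_mul_eq_mul_div, lt_div_iff₀ hS2pos']
    -- bounds
    set s : ℝ := (t:ℝ) - 1 with hsdef
    have hs1 : 1 ≤ s := by
      rw [hsdef]
      have : (2:ℝ) ≤ (t:ℝ) := by exact_mod_cast ht2
      linarith
    have hsx : K₀ * C * K / ((K:ℝ) - K₀) < s := by
      have h1 : (Nat.ceil (K₀ * C * K / ((K:ℝ) - K₀)) + 2 : ℕ) ≤ t := hT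
      have h2 : ((Nat.ceil (K₀ * C * K / ((K:ℝ) - K₀)) : ℕ) : ℝ) + 2 ≤ (t:ℝ) := by
        exact_mod_cast h1
      have h3 := Nat.le_ceil (K₀ * C * K / ((K:ℝ) - K₀))
      rw [hsdef]
      linarith
    have hb : K₀ * C * K < s * ((K:ℝ) - K₀) := by
      rw [div_lt_iff₀ hKK₀] at hsx
      linarith
    have haq : aqf ρ t ≤ C := aqf_le ρ hρ0 hρ1 t
    have hbq : bqf ρ γ t ≤ s / K := by
      have h4 := bqf_le ρ γ hρ0 hρ1 hγ0 (K:ℝ) hKR hγC (t-1)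
      rw [Nat.sub_add_cancel ht1] at h4
      have h5 : ((t-1:ℕ):ℝ) = s := by
        rw [hsdef]
        push_cast [Nat.cast_sub ht1]
        ring
      rw [h5] at h4
      exact h4
    have hS2K : (aqf ρ t + bqf ρ γ t) * K ≤ C * K + s := by
      have h6 : (aqf ρ t + bqf ρ γ t) * K ≤ (C + s/K) * K := by
        apply mul_le_mul_of_nonneg_right _ (le_of_lt hKR)
        linarith
      have h7 : (C + s/K) * K = C * K + s := by
        field_simp
      linarith
    have htr : (t:ℝ) = s + 1 := by rw [hsdef]; ring
    rw [htr]
    have key : s * K₀ * (aqf ρ t + bqf ρ γ t) * K < s * s * K := by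
      have h8 : s * K₀ * ((aqf ρ t + bqf ρ γ t) * K) ≤ s * K₀ * (C * K + s) :=
        mul_le_mul_of_nonneg_left hS2K (by positivity)
      have h9 : s * (K₀ * C * K) < s * (s * ((K:ℝ) - K₀)) :=
        mul_lt_mul_of_pos_left hb (by linarith)
      nlinarith
    nlinarith [key, hKR, hs1]
end

section
/- Consider the mentorship-augmented maximal generations network with generation size K ≥ 1: each agent i = (t−1)K+k in generation t ≥ 2 observes the log-actions of all K agents of generation t−1 and additionally the log-signal of one designated agent m(i) of generation t−1; the equilibrium weight vectors are defined recursively by W_i := e_i + proj_{V_i}(𝟙), where V_i ⊆ ℝ^{i−1} is the linear span of the observed vectors (the restrictions to coordinates 1,…,i−1 of W_j for all j in generation t−1, together with the standard basis vector e_{m(i)}), 𝟙 ∈ ℝ^{i−1} is the all-ones vector, and proj_{V_i} is orthogonal projection onto V_i (for agents in generation 1, W_i := e_i). Then for every agent i in generation t, W_i = e_i + Σ_{j=1}^{(t−1)K} e_j; hence r_i := Σ_j W_i(j) = (t−1)K + 1 > i − K for every agent i, and lim_{i→∞} r_i/i = 1, i.e. aggregative efficiency is 1. -/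
open Finset Filter

/-- Restriction of a weight vector to coordinates `1,…,i−1`, as an element of
Euclidean space. -/
noncomputable def restr (i : ℕ) (v : ℕ → ℝ) : EuclideanSpace ℝ (Fin (i - 1)) :=
  WithLp.toLp 2 (fun m => v (m.1 + 1))

/-- The span `V_i` of the observed vectors of an agent `i` in generation `t` of the
mentorship-augmented maximal generations network: the restrictions of the weight
vectors of all agents of generation `t−1`, together with the standard basis vector
of the mentor's coordinate. -/
noncomputable def mentorSpan (K : ℕ) (W : ℕ → ℕ → ℝ) (mentor : ℕ → ℕ) (t i : ℕ) :
    Submodule ℝ (EuclideanSpace ℝ (Fin (i - 1))) :=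
  Submodule.span ℝ
    (((fun j => restr i (W j)) '' {j | (t - 2) * K + 1 ≤ j ∧ j ≤ (t - 1) * K})
      ∪ {restr i (fun m => if m = mentor i then 1 else 0)})

lemma proj_eq (K s k : ℕ) (hK : 1 ≤ K) (hk : 1 ≤ k) (hkK : k ≤ K)
    (mentor : ℕ → ℕ) (W : ℕ → ℕ → ℝ)
    (hgen : ∀ j m, s*K + 1 ≤ j → j ≤ s*K + K →
      W j m = (if m = j then 1 else 0) + (if 1 ≤ m ∧ m ≤ s*K then 1 else 0))
    (hm1 : s*K + 1 ≤ mentor ((s+1)*K + k)) (hm2 : mentor ((s+1)*K + k) ≤ s*K + K) :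
    (Submodule.orthogonalProjectionOnto (mentorSpan K W mentor (s+2) ((s+1)*K + k))
        (WithLp.toLp 2 (fun _ => (1:ℝ))) : EuclideanSpace ℝ (Fin ((s+1)*K + k - 1)))
      = WithLp.toLp 2 (fun m => if m.1 + 1 ≤ s*K + K then 1 else 0) := by
  have hsK : (s+1)*K = s*K + K := by ring
  set i := (s+1)*K + k with hi
  set u : EuclideanSpace ℝ (Fin (i-1)) := WithLp.toLp 2 (fun m => if m.1 + 1 ≤ s*K + K then 1 else 0)
    with hu
  set one : EuclideanSpace ℝ (Fin (i-1)) := WithLp.toLp 2 (fun _ => (1:ℝ)) with hone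
  have hSset : mentorSpan K W mentor (s+2) i
      = Submodule.span ℝ (((fun j => restr i (W j)) '' {j | s*K + 1 ≤ j ∧ j ≤ s*K + K})
        ∪ {restr i (fun m => if m = mentor i then 1 else 0)}) := by
    have h2 : s + 2 - 2 = s := by omega
    have h1 : s + 2 - 1 = s + 1 := by omega
    rw [mentorSpan, h2, h1, hsK]
  show (Submodule.orthogonalProjectionOnto (mentorSpan K W mentor (s+2) i) one
      : EuclideanSpace ℝ (Fin (i-1))) = u
  have hmem : u ∈ mentorSpan K W mentor (s+2) i := by
    have hexp : u = (∑ k' ∈ Finset.Icc 1 K, restr i (W (s*K + k')))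
          + (1 - (K:ℝ)) • (restr i (W (mentor i))
              - restr i (fun m => if m = mentor i then 1 else 0)) := by
      refine (WithLp.ext_iff 2).2 (funext fun m => ?_)
      have happly : ((∑ k' ∈ Finset.Icc 1 K, restr i (W (s*K + k')))
          + (1 - (K:ℝ)) • (restr i (W (mentor i))
              - restr i (fun m => if m = mentor i then 1 else 0))) m
          = (∑ k' ∈ Finset.Icc 1 K, W (s*K + k') (m.1+1))
            + (1 - (K:ℝ)) * (W (mentor i) (m.1+1)
              - (if m.1+1 = mentor i then 1 else 0)) := by
        rw [PiLp.add_apply, PiLp.smul_apply, PiLp.sub_apply, WithLp.ofLp_sum, Finset.sum_apply]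
        simp [restr]
      rw [happly]
      set n := m.1 + 1 with hn
      have hWk' : ∀ k' ∈ Finset.Icc 1 K, W (s*K + k') n
          = (if n = s*K + k' then (1:ℝ) else 0) + (if 1 ≤ n ∧ n ≤ s*K then 1 else 0) := by
        intro k' hk'
        simp only [mem_Icc] at hk'
        exact hgen _ _ (by omega) (by omega)
      rw [Finset.sum_congr rfl hWk', Finset.sum_add_distrib, Finset.sum_const,
        Nat.card_Icc, Nat.add_sub_cancel, nsmul_eq_mul]
      have hsum : (∑ k' ∈ Finset.Icc 1 K, (if n = s*K + k' then (1:ℝ) else 0))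
          = if s*K + 1 ≤ n ∧ n ≤ s*K + K then 1 else 0 := by
        by_cases h : s*K + 1 ≤ n ∧ n ≤ s*K + K
        · rw [if_pos h, Finset.sum_eq_single (n - s*K)]
          · rw [if_pos (by omega)]
          · intro b hb hbne; rw [if_neg]; simp only [mem_Icc] at hb; omega
          · intro h'; exact absurd (Finset.mem_Icc.2 ⟨by omega, by omega⟩) h'
        · rw [if_neg h]; apply Finset.sum_eq_zero; intro b hb; rw [if_neg]
          simp only [mem_Icc] at hb; omega
      rw [hsum, hgen _ _ hm1 hm2]
      have hum : u m = if n ≤ s*K + K then (1:ℝ) else 0 := rfl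
      rw [hum]
      have hn1 : 1 ≤ n := by omega
      split_ifs <;> first | ring1 | (exfalso; omega)
    rw [hSset, hexp]
    apply Submodule.add_mem
    · apply Submodule.sum_mem
      intro k' hk'
      simp only [mem_Icc] at hk'
      exact Submodule.subset_span (Or.inl ⟨s*K + k', ⟨by omega, by omega⟩, rfl⟩)
    · apply Submodule.smul_mem
      apply Submodule.sub_mem
      · exact Submodule.subset_span (Or.inl ⟨mentor i, ⟨hm1, hm2⟩, rfl⟩)
      · exact Submodule.subset_span (Or.inr rfl)
  rw [Submodule.coe_orthogonalProjectionOnto_apply]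
  refine Submodule.eq_starProjection_of_mem_of_inner_eq_zero hmem ?_
  intro w hw
  rw [hSset] at hw
  have hd : ∀ m : Fin (i-1), m.1 + 1 ≤ s*K + K → (one - u) m = 0 := by
    intro m hm
    rw [PiLp.sub_apply]
    have h1 : one m = 1 := rfl
    have h2 : u m = if m.1 + 1 ≤ s*K + K then (1:ℝ) else 0 := rfl
    rw [h1, h2, if_pos hm]; ring
  have hbase : ∀ v ∈ ((fun j => restr i (W j)) '' {j | s*K + 1 ≤ j ∧ j ≤ s*K + K})
      ∪ {restr i (fun m => if m = mentor i then 1 else 0)},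
      inner ℝ (one - u) v = (0:ℝ) := by
    rintro v (⟨j, ⟨hj1, hj2⟩, rfl⟩ | hv)
    · rw [PiLp.inner_apply]
      apply Finset.sum_eq_zero
      intro m _
      by_cases hm : m.1 + 1 ≤ s*K + K
      · simp [hd m hm]
      · have : W j (m.1+1) = 0 := by
          rw [hgen j _ hj1 hj2, if_neg (by omega), if_neg (by omega)]; ring
        have hr : restr i (W j) m = 0 := this
        simp [hr]
    · simp only [Set.mem_singleton_iff] at hv
      subst hv
      rw [PiLp.inner_apply]
      apply Finset.sum_eq_zero
      intro m _
      by_cases hm : m.1 + 1 ≤ s*K + K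
      · simp [hd m hm]
      · have h5 : m.1 + 1 ≠ mentor i := by omega
        have hr : restr i (fun m' => if m' = mentor i then (1:ℝ) else 0) m = 0 := by
          simp [restr, h5]
        simp [hr]
  refine Submodule.span_induction hbase ?_ ?_ ?_ hw
  · simp
  · intro x y _ _ hx hy; rw [inner_add_right, hx, hy]; ring
  · intro a x _ hx; rw [inner_smul_right, hx]; ring

lemma key (K : ℕ) (hK : 1 ≤ K)
    (mentor : ℕ → ℕ) (W : ℕ → ℕ → ℝ)
    (hmentor : ∀ t k : ℕ, 2 ≤ t → 1 ≤ k → k ≤ K →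
      (t - 2) * K + 1 ≤ mentor ((t - 1) * K + k) ∧
        mentor ((t - 1) * K + k) ≤ (t - 1) * K)
    (hWgen1 : ∀ i : ℕ, 1 ≤ i → i ≤ K → ∀ m : ℕ,
      W i m = if m = i then 1 else 0)
    (hWrec : ∀ t k : ℕ, 2 ≤ t → 1 ≤ k → k ≤ K →
      (∀ m : Fin ((t - 1) * K + k - 1),
        W ((t - 1) * K + k) (m.1 + 1)
          = (Submodule.orthogonalProjectionOnto (mentorSpan K W mentor t ((t - 1) * K + k))
              (WithLp.toLp 2 (fun _ => (1 : ℝ))) : EuclideanSpace ℝ (Fin ((t - 1) * K + k - 1))) m) ∧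
      W ((t - 1) * K + k) ((t - 1) * K + k) = 1 ∧
      W ((t - 1) * K + k) 0 = 0 ∧
      (∀ m : ℕ, (t - 1) * K + k < m → W ((t - 1) * K + k) m = 0)) :
    ∀ t k : ℕ, 1 ≤ t → 1 ≤ k → k ≤ K → ∀ m : ℕ,
      W ((t - 1) * K + k) m
        = (if m = (t - 1) * K + k then 1 else 0)
          + (if 1 ≤ m ∧ m ≤ (t - 1) * K then 1 else 0) := by
  suffices h : ∀ t, 1 ≤ t → ∀ k, 1 ≤ k → k ≤ K → ∀ m : ℕ,
      W ((t - 1) * K + k) m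
        = (if m = (t - 1) * K + k then 1 else 0)
          + (if 1 ≤ m ∧ m ≤ (t - 1) * K then 1 else 0) by
    intro t k ht hk hkK m; exact h t ht k hk hkK m
  intro t ht
  induction t, ht using Nat.le_induction with
  | base =>
    intro k hk hkK m
    have e0 : (1 - 1) * K = 0 := by norm_num
    rw [e0, zero_add, hWgen1 k hk hkK m]
    have : ¬ (1 ≤ m ∧ m ≤ 0) := by omega
    rw [if_neg this, add_zero]
  | succ n hn IH =>
    obtain ⟨s, rfl⟩ : ∃ s, n = s + 1 := ⟨n - 1, by omega⟩
    intro k hk hkK m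
    have hsK : (s+1)*K = s*K + K := by ring
    have e1 : s + 1 + 1 - 1 = s + 1 := by omega
    have e2 : s + 1 - 1 = s := by omega
    have e3 : s + 2 - 1 = s + 1 := by omega
    have e4 : s + 2 - 2 = s := by omega
    rw [e1]
    -- the formula for generation s+1 (the previous generation)
    have hgen : ∀ j m, s*K + 1 ≤ j → j ≤ s*K + K →
        W j m = (if m = j then (1:ℝ) else 0) + (if 1 ≤ m ∧ m ≤ s*K then 1 else 0) := by
      intro j m hj1 hj2
      have h := IH (j - s*K) (by omega) (by omega) m
      rw [e2] at h
      rwa [show s*K + (j - s*K) = j from by omega] at h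
    -- mentor bounds
    have hm := hmentor (s+2) k (by omega) hk hkK
    rw [e3, e4] at hm
    have hm1 : s*K + 1 ≤ mentor ((s+1)*K + k) := hm.1
    have hm2 : mentor ((s+1)*K + k) ≤ s*K + K := by rw [← hsK]; exact hm.2
    have hrec := hWrec (s+2) k (by omega) hk hkK
    rw [e3] at hrec
    have hproj := proj_eq K s k hK hk hkK mentor W hgen hm1 hm2
    set i := (s+1)*K + k with hi
    have hiK : s*K + K < i := by omega
    rcases Nat.lt_trichotomy m i with hmlt | hmeq | hmgt
    · rcases Nat.eq_zero_or_pos m with rfl | hm0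
      · rw [hrec.2.2.1, if_neg (by omega), if_neg (by omega), add_zero]
      · have hmm : m - 1 < i - 1 := by omega
        have h := hrec.1 ⟨m - 1, hmm⟩
        rw [hproj] at h
        simp only at h
        rw [show m - 1 + 1 = m from by omega] at h
        rw [h, if_neg (by omega : ¬ m = i)]
        by_cases hc : m ≤ s*K + K
        · rw [if_pos hc, if_pos (by omega : 1 ≤ m ∧ m ≤ (s+1)*K), zero_add]
        · rw [if_neg hc, if_neg (by omega : ¬ (1 ≤ m ∧ m ≤ (s+1)*K)), add_zero]
    · rw [hmeq, hrec.2.1, if_pos rfl, if_neg (by omega : ¬ (1 ≤ i ∧ i ≤ (s+1)*K)), add_zero]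
    · rw [hrec.2.2.2 m hmgt, if_neg (by omega), if_neg (by omega : ¬ (1 ≤ m ∧ m ≤ (s+1)*K)), add_zero]

/-- In the mentorship-augmented maximal generations network with
generation size `K ≥ 1` (each agent of generation `t ≥ 2` observes the log-actions
of all `K` agents of generation `t−1` and additionally the log-signal of one
designated mentor `m(i)` of generation `t−1`), the Bayesian weight vectors
`W_i = e_i + proj_{V_i}(𝟙)` satisfy `W_i = e_i + Σ_{j=1}^{(t−1)K} e_j` for every
agent `i` in generation `t`; hence `r_i = (t−1)K+1 > i − K` and the aggregative
efficiency is `1`. -/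
theorem mentorship_full_efficiency (K : ℕ) (hK : 1 ≤ K)
    (mentor : ℕ → ℕ) (W : ℕ → ℕ → ℝ)
    (hmentor : ∀ t k : ℕ, 2 ≤ t → 1 ≤ k → k ≤ K →
      (t - 2) * K + 1 ≤ mentor ((t - 1) * K + k) ∧
        mentor ((t - 1) * K + k) ≤ (t - 1) * K)
    (hWgen1 : ∀ i : ℕ, 1 ≤ i → i ≤ K → ∀ m : ℕ,
      W i m = if m = i then 1 else 0)
    (hWrec : ∀ t k : ℕ, 2 ≤ t → 1 ≤ k → k ≤ K →
      (∀ m : Fin ((t - 1) * K + k - 1),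
        W ((t - 1) * K + k) (m.1 + 1)
          = (Submodule.orthogonalProjectionOnto (mentorSpan K W mentor t ((t - 1) * K + k))
              (WithLp.toLp 2 (fun _ => (1 : ℝ))) : EuclideanSpace ℝ (Fin ((t - 1) * K + k - 1))) m) ∧
      W ((t - 1) * K + k) ((t - 1) * K + k) = 1 ∧
      W ((t - 1) * K + k) 0 = 0 ∧
      (∀ m : ℕ, (t - 1) * K + k < m → W ((t - 1) * K + k) m = 0)) :
    (∀ t k : ℕ, 1 ≤ t → 1 ≤ k → k ≤ K → ∀ m : ℕ,
      W ((t - 1) * K + k) m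
        = (if m = (t - 1) * K + k then 1 else 0)
          + (if 1 ≤ m ∧ m ≤ (t - 1) * K then 1 else 0)) ∧
    (∀ t k : ℕ, 1 ≤ t → 1 ≤ k → k ≤ K →
      (∑ j ∈ Finset.range ((t - 1) * K + k + 1), W ((t - 1) * K + k) j)
        = (t - 1) * K + 1) ∧
    (∀ t k : ℕ, 1 ≤ t → 1 ≤ k → k ≤ K →
      ((((t - 1) * K + k : ℕ) : ℝ) - K)
        < ∑ j ∈ Finset.range ((t - 1) * K + k + 1), W ((t - 1) * K + k) j) ∧
    Tendsto (fun i : ℕ => (∑ j ∈ Finset.range (i + 1), W i j) / (i : ℝ))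
      atTop (nhds 1) := by
  have hform := key K hK mentor W hmentor hWgen1 hWrec
  have hsum : ∀ t k : ℕ, 1 ≤ t → 1 ≤ k → k ≤ K →
      (∑ j ∈ Finset.range ((t - 1) * K + k + 1), W ((t - 1) * K + k) j)
        = (t - 1) * K + 1 := by
    intro t k ht hk hkK
    rw [Finset.sum_congr rfl (fun j _ => hform t k ht hk hkK j), Finset.sum_add_distrib]
    have h1 : (∑ j ∈ Finset.range ((t-1)*K + k + 1),
        if j = (t-1)*K + k then (1:ℝ) else 0) = 1 := by
      rw [Finset.sum_ite_eq' (Finset.range ((t-1)*K+k+1)) ((t-1)*K+k) (fun _ => (1:ℝ)),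
        if_pos (Finset.mem_range.2 (by omega))]
    have h2 : (∑ j ∈ Finset.range ((t-1)*K + k + 1),
        if 1 ≤ j ∧ j ≤ (t-1)*K then (1:ℝ) else 0) = ((t-1)*K : ℕ) := by
      rw [Finset.sum_boole]
      have hfil : (Finset.range ((t-1)*K + k + 1)).filter (fun j => 1 ≤ j ∧ j ≤ (t-1)*K)
          = Finset.Icc 1 ((t-1)*K) := by
        ext j
        simp only [Finset.mem_filter, Finset.mem_range, Finset.mem_Icc]
        omega
      rw [hfil, Nat.card_Icc, Nat.add_sub_cancel]
    rw [h1, h2, Nat.cast_mul, Nat.cast_sub ht]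
    push_cast
    ring
  have hlt : ∀ t k : ℕ, 1 ≤ t → 1 ≤ k → k ≤ K →
      ((((t - 1) * K + k : ℕ) : ℝ) - K)
        < ∑ j ∈ Finset.range ((t - 1) * K + k + 1), W ((t - 1) * K + k) j := by
    intro t k ht hk hkK
    rw [hsum t k ht hk hkK]
    have hkc : (k:ℝ) ≤ K := by exact_mod_cast hkK
    push_cast [Nat.cast_sub ht]
    linarith
  refine ⟨hform, hsum, hlt, ?_⟩
  have hS : ∀ i : ℕ, 1 ≤ i →
      ((i:ℝ) - K < (∑ j ∈ Finset.range (i+1), W i j) ∧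
        (∑ j ∈ Finset.range (i+1), W i j) ≤ i) := by
    intro i hi
    obtain ⟨q, r, hrK, hi'⟩ : ∃ q r, r < K ∧ i = K*q + r + 1 :=
      ⟨(i-1)/K, (i-1)%K, Nat.mod_lt _ (by omega),
        by have := Nat.div_add_mod (i-1) K; omega⟩
    have hik : (q+1-1)*K + (r+1) = i := by
      rw [Nat.add_sub_cancel, Nat.mul_comm]; omega
    have h := hsum (q+1) (r+1) (by omega) (by omega) (by omega)
    rw [hik] at h
    push_cast at h
    have hub : K*q + 1 ≤ i := by omega
    have hlb : i ≤ K*q + K := by omega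
    have hub' : (K:ℝ)*q + 1 ≤ i := by exact_mod_cast hub
    have hlb' : (i:ℝ) ≤ (K:ℝ)*q + K := by exact_mod_cast hlb
    constructor
    · rw [h]; nlinarith
    · rw [h]; nlinarith
  have h0 : Tendsto (fun i : ℕ => 1 - (K:ℝ)/i) atTop (nhds 1) := by
    have hz := tendsto_const_div_atTop_nhds_zero_nat (K:ℝ)
    have := (tendsto_const_nhds (x := (1:ℝ)) (f := (atTop : Filter ℕ))).sub hz
    simpa using this
  refine tendsto_of_tendsto_of_tendsto_of_le_of_le' h0 tendsto_const_nhds ?_ ?_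
  · filter_upwards [eventually_ge_atTop 1] with i hi
    have hi0 : (0:ℝ) < i := by exact_mod_cast Nat.lt_of_lt_of_le Nat.zero_lt_one hi
    have hb := (hS i hi).1
    have he : 1 - (K:ℝ)/i = ((i:ℝ) - K)/i := by field_simp
    rw [he, div_le_div_iff₀ hi0 hi0]
    nlinarith
  · filter_upwards [eventually_ge_atTop 1] with i hi
    have hi0 : (0:ℝ) < i := by exact_mod_cast Nat.lt_of_lt_of_le Nat.zero_lt_one hi
    exact div_le_one_of_le₀ (hS i hi).2 (le_of_lt hi0)
end
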